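/- arXiv:2009.02234 — 2 statements merged into one kernel-verified Lean document; each statement's English description precedes it below -/
import Mathlib

section
/- Let G be the graph with vertices v_1, …, v_6 and edges e_1 = v_1v_2, e_2 = v_2v_3, e_3 = v_3v_4, e_4 = v_4v_5, e_5 = v_5v_1, e_6 = v_1v_6, e_7 = v_3v_6 (a 5-cycle and a 4-cycle glued along the path v_1 v_2 v_3). Then the element (1, 1, 1, 2, 1, 1, 1, 3) of ℤ^E × ℤ (coordinates ordered e_1, …, e_7, then the last coordinate) lies in int(M_G), and m(G) = 3. (Equivalently, reg K[C_5 #_{P_2} C_4] = 5.) -/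
/-! Basic definitions for cut monoids of finite simple graphs. -/

open Classical in
/-- The cut vector of a vertex set `A`, as a function on `Sym2 V`:
value `1` on pairs with exactly one element in `A`, and `0` otherwise. -/
noncomputable def cutVec {V : Type} (A : Set V) : Sym2 V → ℤ :=
  Sym2.lift ⟨fun v w => if ((v ∈ A) ↔ (w ∈ A)) then 0 else 1,
    fun v w => if_congr iff_comm rfl rfl⟩

variable {V : Type}

/-- The generators `(δ_A, 1)` of the cut monoid of `G`. -/
def cutGens (G : SimpleGraph V) : Set ((G.edgeSet → ℤ) × ℤ) :=
  {p | ∃ A : Set V, p = (fun e => cutVec A e.1, 1)}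

/-- The cut monoid `M_G` of a graph `G`. -/
def cutMonoid (G : SimpleGraph V) : AddSubmonoid ((G.edgeSet → ℤ) × ℤ) :=
  AddSubmonoid.closure (cutGens G)

/-- The group `gp(M_G)` generated by the cut monoid. -/
def cutGroup (G : SimpleGraph V) : AddSubgroup ((G.edgeSet → ℤ) × ℤ) :=
  AddSubgroup.closure (cutGens G)

/-- `M_G` is normal: every `x ∈ gp(M_G)` with `n • x ∈ M_G` for some `n ≥ 1` lies in `M_G`. -/
def CutNormal (G : SimpleGraph V) : Prop :=
  ∀ x ∈ cutGroup G, (∃ n : ℕ, 1 ≤ n ∧ n • x ∈ cutMonoid G) → x ∈ cutMonoid G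

/-- `M_G` is seminormal: every `x ∈ gp(M_G)` with `2 • x ∈ M_G` and `3 • x ∈ M_G`
lies in `M_G`. -/
def CutSeminormal (G : SimpleGraph V) : Prop :=
  ∀ x ∈ cutGroup G, 2 • x ∈ cutMonoid G → 3 • x ∈ cutMonoid G → x ∈ cutMonoid G

/-- Generators of the cone of `M_G`: nonnegative real multiples of the `(δ_A, 1)`. -/
noncomputable def cutConeGens (G : SimpleGraph V) : Set ((G.edgeSet → ℝ) × ℝ) :=
  {q | ∃ (c : ℝ) (A : Set V), 0 ≤ c ∧
    q = c • ((fun e => ((cutVec A e.1 : ℤ) : ℝ), (1 : ℝ)))}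

/-- The cone `cone(M_G)`: all finite nonnegative real combinations of the `(δ_A, 1)`. -/
noncomputable def cutCone (G : SimpleGraph V) : Set ((G.edgeSet → ℝ) × ℝ) :=
  (AddSubmonoid.closure (cutConeGens G) : Set ((G.edgeSet → ℝ) × ℝ))

/-- The canonical map from `ℤ^E × ℤ` to `ℝ^E × ℝ`. -/
noncomputable def toRealCut (G : SimpleGraph V) (p : (G.edgeSet → ℤ) × ℤ) :
    (G.edgeSet → ℝ) × ℝ :=
  (fun e => ((p.1 e : ℤ) : ℝ), ((p.2 : ℤ) : ℝ))

/-- `int(M_G)`: elements of `M_G` mapping into the topological interior of `cone(M_G)`. -/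
noncomputable def cutInterior (G : SimpleGraph V) : Set ((G.edgeSet → ℤ) × ℤ) :=
  {p | p ∈ cutMonoid G ∧ toRealCut G p ∈ interior (cutCone G)}

/-- The set of last coordinates `α ∈ ℕ` realized by elements of `int(M_G)`;
its least element is `m(G)`. -/
noncomputable def cutDegrees (G : SimpleGraph V) : Set ℕ :=
  {α | ∃ x : G.edgeSet → ℤ, ((x, (α : ℤ)) : (G.edgeSet → ℤ) × ℤ) ∈ cutInterior G}

/-- `H` is a minor of `G`: branch sets `B u` are nonempty, pairwise disjoint,
induce connected subgraphs, and edges of `H` are witnessed by edges of `G`. -/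
def GraphMinor {W V : Type} (H : SimpleGraph W) (G : SimpleGraph V) : Prop :=
  ∃ B : W → Set V,
    (∀ u, (B u).Nonempty) ∧
    (∀ u v, u ≠ v → Disjoint (B u) (B v)) ∧
    (∀ u, (G.induce (B u)).Connected) ∧
    (∀ u v, H.Adj u v → ∃ a ∈ B u, ∃ b ∈ B v, G.Adj a b)

/-- `G` is `K₅`-minor-free. -/
def K5Free (G : SimpleGraph V) : Prop :=
  ¬ GraphMinor (⊤ : SimpleGraph (Fin 5)) G

/-- `G` is bipartite: vertices split into two parts so every edge joins the parts. -/
def BipartiteG (G : SimpleGraph V) : Prop :=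
  ∃ s : Set V, ∀ ⦃v w⦄, G.Adj v w → ((v ∈ s ∧ w ∉ s) ∨ (w ∈ s ∧ v ∉ s))

/-- `G` has an induced cycle of length `n` (n ≥ 3): an induced-subgraph copy of the
cycle graph of length `n`. -/
def HasInducedCycleLen (G : SimpleGraph V) (n : ℕ) : Prop :=
  3 ≤ n ∧ Nonempty (SimpleGraph.cycleGraph n ↪g G)

/-- `G` contains a triangle. -/
def HasTriangle (G : SimpleGraph V) : Prop :=
  ∃ a b c, G.Adj a b ∧ G.Adj b c ∧ G.Adj a c

/-- `G` is chordal: every induced cycle is a triangle. -/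
def ChordalG (G : SimpleGraph V) : Prop :=
  ∀ n, HasInducedCycleLen G n → n = 3

/-- `G` is bridgeless: every edge lies on some cycle. -/
def BridgelessG (G : SimpleGraph V) : Prop :=
  ∀ e ∈ G.edgeSet, ∃ (v : V) (c : G.Walk v v), c.IsCycle ∧ e ∈ c.edges

/-- `G` is (isomorphic to) a cycle of length `n`. -/
def IsCycleOfLen (G : SimpleGraph V) (n : ℕ) : Prop :=
  3 ≤ n ∧ Nonempty (G ≃g SimpleGraph.cycleGraph n)

/-- `G` is a cycle. -/
def IsCycleGraph (G : SimpleGraph V) : Prop :=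
  ∃ n, IsCycleOfLen G n

/-- `G` is a `0`-sum of `G1` and `G2`: copies of `G1`, `G2` cover `G`,
overlap in exactly one vertex, and every edge comes from `G1` or `G2`. -/
def IsZeroSumDecomp {V1 V2 : Type} (G : SimpleGraph V) (G1 : SimpleGraph V1)
    (G2 : SimpleGraph V2) : Prop :=
  ∃ (f1 : V1 ↪ V) (f2 : V2 ↪ V),
    Set.range f1 ∪ Set.range f2 = Set.univ ∧
    (∃ v, Set.range f1 ∩ Set.range f2 = {v}) ∧
    (∀ a b, G.Adj a b ↔
      ((∃ x y, f1 x = a ∧ f1 y = b ∧ G1.Adj x y) ∨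
       (∃ x y, f2 x = a ∧ f2 y = b ∧ G2.Adj x y)))

/-- `G` is a `1`-sum of `G1` and `G2` along a common edge. -/
def IsOneSumDecomp {V1 V2 : Type} (G : SimpleGraph V) (G1 : SimpleGraph V1)
    (G2 : SimpleGraph V2) : Prop :=
  ∃ (f1 : V1 ↪ V) (f2 : V2 ↪ V) (v w : V),
    v ≠ w ∧
    Set.range f1 ∪ Set.range f2 = Set.univ ∧
    Set.range f1 ∩ Set.range f2 = {v, w} ∧
    (∃ x y, f1 x = v ∧ f1 y = w ∧ G1.Adj x y) ∧
    (∃ x y, f2 x = v ∧ f2 y = w ∧ G2.Adj x y) ∧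
    (∀ a b, G.Adj a b ↔
      ((∃ x y, f1 x = a ∧ f1 y = b ∧ G1.Adj x y) ∨
       (∃ x y, f2 x = a ∧ f2 y = b ∧ G2.Adj x y)))

/-- Ring graphs: obtained, up to adding isolated vertices, from finitely many
(finite) trees and cycles by iterated `0`-sums and `1`-sums. -/
inductive IsRingGraph : {V : Type} → SimpleGraph V → Prop
  | tree {V : Type} (G : SimpleGraph V) :
      Finite V → G.Connected → G.IsAcyclic → IsRingGraph G
  | cycle {V : Type} (G : SimpleGraph V) : IsCycleGraph G → IsRingGraph G
  | zeroSum {V1 V2 V : Type} {G1 : SimpleGraph V1} {G2 : SimpleGraph V2}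
      {G : SimpleGraph V} :
      IsRingGraph G1 → IsRingGraph G2 → IsZeroSumDecomp G G1 G2 → IsRingGraph G
  | oneSum {V1 V2 V : Type} {G1 : SimpleGraph V1} {G2 : SimpleGraph V2}
      {G : SimpleGraph V} :
      IsRingGraph G1 → IsRingGraph G2 → IsOneSumDecomp G G1 G2 → IsRingGraph G
  | addIsolated {V W : Type} {G : SimpleGraph V} {H : SimpleGraph W} (f : V ↪ W) :
      IsRingGraph G → (∀ a b, H.Adj a b ↔ ∃ x y, f x = a ∧ f y = b ∧ G.Adj x y) →
      IsRingGraph H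

/-- An edge of an induced subgraph is an edge of the ambient graph. -/
lemma induce_edge_mem (G : SimpleGraph V) (s : Set V) (e : Sym2 s)
    (he : e ∈ (G.induce s).edgeSet) : e.map Subtype.val ∈ G.edgeSet := by
  induction e using Sym2.ind with
  | _ a b =>
    rw [Sym2.map_pair_eq, SimpleGraph.mem_edgeSet]
    exact he

/-- Restriction of a vector indexed by the edges of `G` to the edges of the
subgraph of `G` induced on `s`. -/
noncomputable def restrictCut (G : SimpleGraph V) (s : Set V) (p : G.edgeSet → ℤ) :
    (G.induce s).edgeSet → ℤ :=
  fun e => p ⟨e.1.map Subtype.val, induce_edge_mem G s e.1 e.2⟩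

/-- The graph `C₅ #_{P₂} C₄`: a `5`-cycle `v₁…v₅` and a `4`-cycle `v₁ v₂ v₃ v₆`
glued along the path `v₁ v₂ v₃` (vertices `v₁,…,v₆` are `0,…,5`). -/
def GC5C4 : SimpleGraph (Fin 6) :=
  SimpleGraph.fromEdgeSet
    {s(0, 1), s(1, 2), s(2, 3), s(3, 4), s(4, 0), s(0, 5), s(2, 5)}


section Aux

open Classical in
lemma cutVec_mk {W : Type} (A : Set W) (a b : W) :
    cutVec A s(a, b) = if ((a ∈ A) ↔ (b ∈ A)) then 0 else 1 := rfl


lemma cutVec_zero_or_one {W : Type} (A : Set W) (e : Sym2 W) :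
    cutVec A e = 0 ∨ cutVec A e = 1 := by
  induction e using Sym2.ind with
  | _ a b => rw [cutVec_mk]; split <;> simp


lemma cv_empty_1 : cutVec (∅ : Set (Fin 6)) s((0:Fin 6), 1) = 0 := by
  rw [cutVec_mk, if_pos (by simp)]


lemma cv_empty_2 : cutVec (∅ : Set (Fin 6)) s((1:Fin 6), 2) = 0 := by
  rw [cutVec_mk, if_pos (by simp)]


lemma cv_empty_3 : cutVec (∅ : Set (Fin 6)) s((2:Fin 6), 3) = 0 := by
  rw [cutVec_mk, if_pos (by simp)]


lemma cv_empty_4 : cutVec (∅ : Set (Fin 6)) s((3:Fin 6), 4) = 0 := by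
  rw [cutVec_mk, if_pos (by simp)]


lemma cv_empty_5 : cutVec (∅ : Set (Fin 6)) s((4:Fin 6), 0) = 0 := by
  rw [cutVec_mk, if_pos (by simp)]


lemma cv_empty_6 : cutVec (∅ : Set (Fin 6)) s((0:Fin 6), 5) = 0 := by
  rw [cutVec_mk, if_pos (by simp)]


lemma cv_empty_7 : cutVec (∅ : Set (Fin 6)) s((2:Fin 6), 5) = 0 := by
  rw [cutVec_mk, if_pos (by simp)]


lemma cv_s1_1 : cutVec ({1} : Set (Fin 6)) s((0:Fin 6), 1) = 1 := by
  rw [cutVec_mk, if_neg (by simp)]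


lemma cv_s1_2 : cutVec ({1} : Set (Fin 6)) s((1:Fin 6), 2) = 1 := by
  rw [cutVec_mk, if_neg (by simp)]


lemma cv_s1_3 : cutVec ({1} : Set (Fin 6)) s((2:Fin 6), 3) = 0 := by
  rw [cutVec_mk, if_pos (by simp)]


lemma cv_s1_4 : cutVec ({1} : Set (Fin 6)) s((3:Fin 6), 4) = 0 := by
  rw [cutVec_mk, if_pos (by simp)]


lemma cv_s1_5 : cutVec ({1} : Set (Fin 6)) s((4:Fin 6), 0) = 0 := by
  rw [cutVec_mk, if_pos (by simp)]


lemma cv_s1_6 : cutVec ({1} : Set (Fin 6)) s((0:Fin 6), 5) = 0 := by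
  rw [cutVec_mk, if_pos (by simp)]


lemma cv_s1_7 : cutVec ({1} : Set (Fin 6)) s((2:Fin 6), 5) = 0 := by
  rw [cutVec_mk, if_pos (by simp)]


lemma cv_s3_1 : cutVec ({3} : Set (Fin 6)) s((0:Fin 6), 1) = 0 := by
  rw [cutVec_mk, if_pos (by simp)]


lemma cv_s3_2 : cutVec ({3} : Set (Fin 6)) s((1:Fin 6), 2) = 0 := by
  rw [cutVec_mk, if_pos (by simp)]


lemma cv_s3_3 : cutVec ({3} : Set (Fin 6)) s((2:Fin 6), 3) = 1 := by
  rw [cutVec_mk, if_neg (by simp)]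


lemma cv_s3_4 : cutVec ({3} : Set (Fin 6)) s((3:Fin 6), 4) = 1 := by
  rw [cutVec_mk, if_neg (by simp)]


lemma cv_s3_5 : cutVec ({3} : Set (Fin 6)) s((4:Fin 6), 0) = 0 := by
  rw [cutVec_mk, if_pos (by simp)]


lemma cv_s3_6 : cutVec ({3} : Set (Fin 6)) s((0:Fin 6), 5) = 0 := by
  rw [cutVec_mk, if_pos (by simp)]


lemma cv_s3_7 : cutVec ({3} : Set (Fin 6)) s((2:Fin 6), 5) = 0 := by
  rw [cutVec_mk, if_pos (by simp)]


lemma cv_s4_1 : cutVec ({4} : Set (Fin 6)) s((0:Fin 6), 1) = 0 := by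
  rw [cutVec_mk, if_pos (by simp)]


lemma cv_s4_2 : cutVec ({4} : Set (Fin 6)) s((1:Fin 6), 2) = 0 := by
  rw [cutVec_mk, if_pos (by simp)]


lemma cv_s4_3 : cutVec ({4} : Set (Fin 6)) s((2:Fin 6), 3) = 0 := by
  rw [cutVec_mk, if_pos (by simp)]


lemma cv_s4_4 : cutVec ({4} : Set (Fin 6)) s((3:Fin 6), 4) = 1 := by
  rw [cutVec_mk, if_neg (by simp)]


lemma cv_s4_5 : cutVec ({4} : Set (Fin 6)) s((4:Fin 6), 0) = 1 := by
  rw [cutVec_mk, if_neg (by simp)]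


lemma cv_s4_6 : cutVec ({4} : Set (Fin 6)) s((0:Fin 6), 5) = 0 := by
  rw [cutVec_mk, if_pos (by simp)]


lemma cv_s4_7 : cutVec ({4} : Set (Fin 6)) s((2:Fin 6), 5) = 0 := by
  rw [cutVec_mk, if_pos (by simp)]


lemma cv_s03_1 : cutVec ({0, 3} : Set (Fin 6)) s((0:Fin 6), 1) = 1 := by
  rw [cutVec_mk, if_neg (by simp)]


lemma cv_s03_2 : cutVec ({0, 3} : Set (Fin 6)) s((1:Fin 6), 2) = 0 := by
  rw [cutVec_mk, if_pos (by simp)]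


lemma cv_s03_3 : cutVec ({0, 3} : Set (Fin 6)) s((2:Fin 6), 3) = 1 := by
  rw [cutVec_mk, if_neg (by simp)]


lemma cv_s03_4 : cutVec ({0, 3} : Set (Fin 6)) s((3:Fin 6), 4) = 1 := by
  rw [cutVec_mk, if_neg (by simp)]


lemma cv_s03_5 : cutVec ({0, 3} : Set (Fin 6)) s((4:Fin 6), 0) = 1 := by
  rw [cutVec_mk, if_neg (by simp)]


lemma cv_s03_6 : cutVec ({0, 3} : Set (Fin 6)) s((0:Fin 6), 5) = 1 := by
  rw [cutVec_mk, if_neg (by simp)]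


lemma cv_s03_7 : cutVec ({0, 3} : Set (Fin 6)) s((2:Fin 6), 5) = 0 := by
  rw [cutVec_mk, if_pos (by simp)]


lemma cv_s23_1 : cutVec ({2, 3} : Set (Fin 6)) s((0:Fin 6), 1) = 0 := by
  rw [cutVec_mk, if_pos (by simp)]


lemma cv_s23_2 : cutVec ({2, 3} : Set (Fin 6)) s((1:Fin 6), 2) = 1 := by
  rw [cutVec_mk, if_neg (by simp)]


lemma cv_s23_3 : cutVec ({2, 3} : Set (Fin 6)) s((2:Fin 6), 3) = 0 := by
  rw [cutVec_mk, if_pos (by simp)]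


lemma cv_s23_4 : cutVec ({2, 3} : Set (Fin 6)) s((3:Fin 6), 4) = 1 := by
  rw [cutVec_mk, if_neg (by simp)]


lemma cv_s23_5 : cutVec ({2, 3} : Set (Fin 6)) s((4:Fin 6), 0) = 0 := by
  rw [cutVec_mk, if_pos (by simp)]


lemma cv_s23_6 : cutVec ({2, 3} : Set (Fin 6)) s((0:Fin 6), 5) = 0 := by
  rw [cutVec_mk, if_pos (by simp)]


lemma cv_s23_7 : cutVec ({2, 3} : Set (Fin 6)) s((2:Fin 6), 5) = 1 := by
  rw [cutVec_mk, if_neg (by simp)]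


lemma cv_s34_1 : cutVec ({3, 4} : Set (Fin 6)) s((0:Fin 6), 1) = 0 := by
  rw [cutVec_mk, if_pos (by simp)]


lemma cv_s34_2 : cutVec ({3, 4} : Set (Fin 6)) s((1:Fin 6), 2) = 0 := by
  rw [cutVec_mk, if_pos (by simp)]


lemma cv_s34_3 : cutVec ({3, 4} : Set (Fin 6)) s((2:Fin 6), 3) = 1 := by
  rw [cutVec_mk, if_neg (by simp)]


lemma cv_s34_4 : cutVec ({3, 4} : Set (Fin 6)) s((3:Fin 6), 4) = 0 := by
  rw [cutVec_mk, if_pos (by simp)]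


lemma cv_s34_5 : cutVec ({3, 4} : Set (Fin 6)) s((4:Fin 6), 0) = 1 := by
  rw [cutVec_mk, if_neg (by simp)]


lemma cv_s34_6 : cutVec ({3, 4} : Set (Fin 6)) s((0:Fin 6), 5) = 0 := by
  rw [cutVec_mk, if_pos (by simp)]


lemma cv_s34_7 : cutVec ({3, 4} : Set (Fin 6)) s((2:Fin 6), 5) = 0 := by
  rw [cutVec_mk, if_pos (by simp)]


lemma cv_s15_1 : cutVec ({1, 5} : Set (Fin 6)) s((0:Fin 6), 1) = 1 := by
  rw [cutVec_mk, if_neg (by simp)]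


lemma cv_s15_2 : cutVec ({1, 5} : Set (Fin 6)) s((1:Fin 6), 2) = 1 := by
  rw [cutVec_mk, if_neg (by simp)]


lemma cv_s15_3 : cutVec ({1, 5} : Set (Fin 6)) s((2:Fin 6), 3) = 0 := by
  rw [cutVec_mk, if_pos (by simp)]


lemma cv_s15_4 : cutVec ({1, 5} : Set (Fin 6)) s((3:Fin 6), 4) = 0 := by
  rw [cutVec_mk, if_pos (by simp)]


lemma cv_s15_5 : cutVec ({1, 5} : Set (Fin 6)) s((4:Fin 6), 0) = 0 := by
  rw [cutVec_mk, if_pos (by simp)]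


lemma cv_s15_6 : cutVec ({1, 5} : Set (Fin 6)) s((0:Fin 6), 5) = 1 := by
  rw [cutVec_mk, if_neg (by simp)]


lemma cv_s15_7 : cutVec ({1, 5} : Set (Fin 6)) s((2:Fin 6), 5) = 1 := by
  rw [cutVec_mk, if_neg (by simp)]


lemma cv_s123_1 : cutVec ({1, 2, 3} : Set (Fin 6)) s((0:Fin 6), 1) = 1 := by
  rw [cutVec_mk, if_neg (by simp)]


lemma cv_s123_2 : cutVec ({1, 2, 3} : Set (Fin 6)) s((1:Fin 6), 2) = 0 := by
  rw [cutVec_mk, if_pos (by simp)]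


lemma cv_s123_3 : cutVec ({1, 2, 3} : Set (Fin 6)) s((2:Fin 6), 3) = 0 := by
  rw [cutVec_mk, if_pos (by simp)]


lemma cv_s123_4 : cutVec ({1, 2, 3} : Set (Fin 6)) s((3:Fin 6), 4) = 1 := by
  rw [cutVec_mk, if_neg (by simp)]


lemma cv_s123_5 : cutVec ({1, 2, 3} : Set (Fin 6)) s((4:Fin 6), 0) = 0 := by
  rw [cutVec_mk, if_pos (by simp)]


lemma cv_s123_6 : cutVec ({1, 2, 3} : Set (Fin 6)) s((0:Fin 6), 5) = 0 := by
  rw [cutVec_mk, if_pos (by simp)]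


lemma cv_s123_7 : cutVec ({1, 2, 3} : Set (Fin 6)) s((2:Fin 6), 5) = 1 := by
  rw [cutVec_mk, if_neg (by simp)]


lemma cv_s023_1 : cutVec ({0, 2, 3} : Set (Fin 6)) s((0:Fin 6), 1) = 1 := by
  rw [cutVec_mk, if_neg (by simp)]


lemma cv_s023_2 : cutVec ({0, 2, 3} : Set (Fin 6)) s((1:Fin 6), 2) = 1 := by
  rw [cutVec_mk, if_neg (by simp)]


lemma cv_s023_3 : cutVec ({0, 2, 3} : Set (Fin 6)) s((2:Fin 6), 3) = 0 := by
  rw [cutVec_mk, if_pos (by simp)]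


lemma cv_s023_4 : cutVec ({0, 2, 3} : Set (Fin 6)) s((3:Fin 6), 4) = 1 := by
  rw [cutVec_mk, if_neg (by simp)]


lemma cv_s023_5 : cutVec ({0, 2, 3} : Set (Fin 6)) s((4:Fin 6), 0) = 1 := by
  rw [cutVec_mk, if_neg (by simp)]


lemma cv_s023_6 : cutVec ({0, 2, 3} : Set (Fin 6)) s((0:Fin 6), 5) = 1 := by
  rw [cutVec_mk, if_neg (by simp)]


lemma cv_s023_7 : cutVec ({0, 2, 3} : Set (Fin 6)) s((2:Fin 6), 5) = 1 := by
  rw [cutVec_mk, if_neg (by simp)]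


lemma cv_s014_1 : cutVec ({0, 1, 4} : Set (Fin 6)) s((0:Fin 6), 1) = 0 := by
  rw [cutVec_mk, if_pos (by simp)]


lemma cv_s014_2 : cutVec ({0, 1, 4} : Set (Fin 6)) s((1:Fin 6), 2) = 1 := by
  rw [cutVec_mk, if_neg (by simp)]


lemma cv_s014_3 : cutVec ({0, 1, 4} : Set (Fin 6)) s((2:Fin 6), 3) = 0 := by
  rw [cutVec_mk, if_pos (by simp)]


lemma cv_s014_4 : cutVec ({0, 1, 4} : Set (Fin 6)) s((3:Fin 6), 4) = 1 := by
  rw [cutVec_mk, if_neg (by simp)]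


lemma cv_s014_5 : cutVec ({0, 1, 4} : Set (Fin 6)) s((4:Fin 6), 0) = 0 := by
  rw [cutVec_mk, if_pos (by simp)]


lemma cv_s014_6 : cutVec ({0, 1, 4} : Set (Fin 6)) s((0:Fin 6), 5) = 1 := by
  rw [cutVec_mk, if_neg (by simp)]


lemma cv_s014_7 : cutVec ({0, 1, 4} : Set (Fin 6)) s((2:Fin 6), 5) = 0 := by
  rw [cutVec_mk, if_pos (by simp)]


lemma cv_s0124_1 : cutVec ({0, 1, 2, 4} : Set (Fin 6)) s((0:Fin 6), 1) = 0 := by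
  rw [cutVec_mk, if_pos (by simp)]


lemma cv_s0124_2 : cutVec ({0, 1, 2, 4} : Set (Fin 6)) s((1:Fin 6), 2) = 0 := by
  rw [cutVec_mk, if_pos (by simp)]


lemma cv_s0124_3 : cutVec ({0, 1, 2, 4} : Set (Fin 6)) s((2:Fin 6), 3) = 1 := by
  rw [cutVec_mk, if_neg (by simp)]


lemma cv_s0124_4 : cutVec ({0, 1, 2, 4} : Set (Fin 6)) s((3:Fin 6), 4) = 1 := by
  rw [cutVec_mk, if_neg (by simp)]


lemma cv_s0124_5 : cutVec ({0, 1, 2, 4} : Set (Fin 6)) s((4:Fin 6), 0) = 0 := by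
  rw [cutVec_mk, if_pos (by simp)]


lemma cv_s0124_6 : cutVec ({0, 1, 2, 4} : Set (Fin 6)) s((0:Fin 6), 5) = 1 := by
  rw [cutVec_mk, if_neg (by simp)]


lemma cv_s0124_7 : cutVec ({0, 1, 2, 4} : Set (Fin 6)) s((2:Fin 6), 5) = 1 := by
  rw [cutVec_mk, if_neg (by simp)]


lemma cutVec_cycle_even (A : Set (Fin 6)) :
    Even (cutVec A s((0:Fin 6),1) + cutVec A s((1:Fin 6),2) + cutVec A s((2:Fin 6),3)
      + cutVec A s((3:Fin 6),4) + cutVec A s((4:Fin 6),0)) := by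
  simp only [cutVec_mk]
  by_cases h0 : (0:Fin 6) ∈ A <;> by_cases h1 : (1:Fin 6) ∈ A <;>
    by_cases h2 : (2:Fin 6) ∈ A <;> by_cases h3 : (3:Fin 6) ∈ A <;>
    by_cases h4 : (4:Fin 6) ∈ A <;>
    simp [h0, h1, h2, h3, h4] <;> decide


lemma gcedge1 : s((0:Fin 6), 1) ∈ GC5C4.edgeSet := by simp [GC5C4]


def GE1 : GC5C4.edgeSet := ⟨s((0:Fin 6), 1), gcedge1⟩


lemma GE1_val : (GE1 : Sym2 (Fin 6)) = s((0:Fin 6), 1) := rfl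


lemma gcedge2 : s((1:Fin 6), 2) ∈ GC5C4.edgeSet := by simp [GC5C4]


def GE2 : GC5C4.edgeSet := ⟨s((1:Fin 6), 2), gcedge2⟩


lemma GE2_val : (GE2 : Sym2 (Fin 6)) = s((1:Fin 6), 2) := rfl


lemma gcedge3 : s((2:Fin 6), 3) ∈ GC5C4.edgeSet := by simp [GC5C4]


def GE3 : GC5C4.edgeSet := ⟨s((2:Fin 6), 3), gcedge3⟩


lemma GE3_val : (GE3 : Sym2 (Fin 6)) = s((2:Fin 6), 3) := rfl


lemma gcedge4 : s((3:Fin 6), 4) ∈ GC5C4.edgeSet := by simp [GC5C4]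


def GE4 : GC5C4.edgeSet := ⟨s((3:Fin 6), 4), gcedge4⟩


lemma GE4_val : (GE4 : Sym2 (Fin 6)) = s((3:Fin 6), 4) := rfl


lemma gcedge5 : s((4:Fin 6), 0) ∈ GC5C4.edgeSet := by simp [GC5C4]


def GE5 : GC5C4.edgeSet := ⟨s((4:Fin 6), 0), gcedge5⟩


lemma GE5_val : (GE5 : Sym2 (Fin 6)) = s((4:Fin 6), 0) := rfl


lemma gcedge6 : s((0:Fin 6), 5) ∈ GC5C4.edgeSet := by simp [GC5C4]


def GE6 : GC5C4.edgeSet := ⟨s((0:Fin 6), 5), gcedge6⟩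


lemma GE6_val : (GE6 : Sym2 (Fin 6)) = s((0:Fin 6), 5) := rfl


lemma gcedge7 : s((2:Fin 6), 5) ∈ GC5C4.edgeSet := by simp [GC5C4]


def GE7 : GC5C4.edgeSet := ⟨s((2:Fin 6), 5), gcedge7⟩


lemma GE7_val : (GE7 : Sym2 (Fin 6)) = s((2:Fin 6), 5) := rfl


lemma edge_cases (e : Sym2 (Fin 6)) (he : e ∈ GC5C4.edgeSet) :
    e = s(0,1) ∨ e = s(1,2) ∨ e = s(2,3) ∨ e = s(3,4) ∨ e = s(4,0) ∨ e = s(0,5) ∨ e = s(2,5) := by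
  rw [GC5C4, SimpleGraph.edgeSet_fromEdgeSet] at he
  simpa using he.1


lemma not_mem_interior_of_functional {G : SimpleGraph V}
    (ℓ : ((G.edgeSet → ℝ) × ℝ) →ₗ[ℝ] ℝ)
    (hg : ∀ g ∈ cutConeGens G, 0 ≤ ℓ g)
    {p : (G.edgeSet → ℝ) × ℝ} (hp : ℓ p = 0)
    (v : (G.edgeSet → ℝ) × ℝ) (hv : ℓ v ≠ 0) :
    p ∉ interior (cutCone G) := by
  intro hmem
  have hcone : ∀ r ∈ cutCone G, 0 ≤ ℓ r := by
    intro r hr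
    refine AddSubmonoid.closure_induction (motive := fun x _ => 0 ≤ ℓ x) hg (by simp) ?_ hr
    intro x y _ _ hx hy
    rw [map_add]; linarith
  have hnhds : cutCone G ∈ nhds p := mem_interior_iff_mem_nhds.mp hmem
  have hten : Filter.Tendsto (fun t : ℝ => p + t • v) (nhds 0) (nhds p) := by
    have hc : Continuous (fun t : ℝ => p + t • v) :=
      continuous_const.add (continuous_id.smul continuous_const)
    simpa using hc.tendsto 0
  have hev : ∀ᶠ t in nhds (0:ℝ), p + t • v ∈ cutCone G := hten.eventually_mem hnhds
  rcases Metric.eventually_nhds_iff.mp hev with ⟨ε, hε, hball⟩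
  have key : ∀ t : ℝ, dist t 0 < ε → 0 ≤ t * ℓ v := by
    intro t ht
    have := hcone _ (hball ht)
    rwa [map_add, hp, map_smul, smul_eq_mul, zero_add] at this
  have hd : ∀ t : ℝ, |t| < ε → 0 ≤ t * ℓ v := by
    intro t ht; exact key t (by rwa [Real.dist_eq, sub_zero])
  rcases lt_or_gt_of_ne hv with h | h
  · have := hd (ε/2) (by rw [abs_of_pos (by linarith)]; linarith)
    nlinarith
  · have := hd (-(ε/2)) (by rw [abs_of_neg (by linarith)]; linarith)
    nlinarith

lemma not_int_deg_zero {G : SimpleGraph V} {p : (G.edgeSet → ℝ) × ℝ}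
    (hp : p.2 = 0) : p ∉ interior (cutCone G) := by
  refine not_mem_interior_of_functional (LinearMap.snd ℝ _ ℝ) ?_ (by simpa) (0, 1) (by simp)
  rintro g ⟨c, A, hc, rfl⟩
  simpa using hc

lemma not_int_edge_zero {G : SimpleGraph V} (e : G.edgeSet) {p : (G.edgeSet → ℝ) × ℝ}
    (hp : p.1 e = 0) : p ∉ interior (cutCone G) := by
  refine not_mem_interior_of_functional
    ((LinearMap.proj e).comp (LinearMap.fst ℝ _ ℝ)) ?_ (by simpa) (fun _ => 1, 0) (by simp)
  rintro g ⟨c, A, hc, rfl⟩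
  have h1 : (0:ℝ) ≤ ((cutVec A e.1 : ℤ) : ℝ) := by
    rcases cutVec_zero_or_one A e.1 with h | h <;> rw [h] <;> norm_num
  simpa using mul_nonneg hc h1

lemma not_int_edge_full {G : SimpleGraph V} (e : G.edgeSet) {p : (G.edgeSet → ℝ) × ℝ}
    (hp : p.1 e = p.2) : p ∉ interior (cutCone G) := by
  refine not_mem_interior_of_functional
    (LinearMap.snd ℝ (G.edgeSet → ℝ) ℝ -
      (LinearMap.proj e).comp (LinearMap.fst ℝ (G.edgeSet → ℝ) ℝ)) ?_ ?_ (0, 1) ?_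
  · rintro g ⟨c, A, hc, rfl⟩
    have h1 : ((cutVec A e.1 : ℤ) : ℝ) ≤ 1 := by
      rcases cutVec_zero_or_one A e.1 with h | h <;> rw [h] <;> norm_num
    simp only [LinearMap.sub_apply, LinearMap.snd_apply, LinearMap.comp_apply,
      LinearMap.fst_apply, LinearMap.proj_apply, Prod.smul_snd, Prod.smul_fst,
      Pi.smul_apply, smul_eq_mul, mul_one]
    nlinarith
  · simp only [LinearMap.sub_apply, LinearMap.snd_apply, LinearMap.comp_apply,
      LinearMap.fst_apply, LinearMap.proj_apply, hp, sub_self]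
  · norm_num [LinearMap.sub_apply, LinearMap.snd_apply, LinearMap.comp_apply,
      LinearMap.fst_apply, LinearMap.proj_apply]


noncomputable def rGen (A : Set (Fin 6)) : (GC5C4.edgeSet → ℝ) × ℝ :=
  (fun e => ((cutVec A e.1 : ℤ) : ℝ), 1)

lemma rGen_mem_cone {c : ℝ} (hc : 0 ≤ c) (A : Set (Fin 6)) :
    c • rGen A ∈ AddSubmonoid.closure (cutConeGens GC5C4) :=
  AddSubmonoid.subset_closure ⟨c, A, hc, rfl⟩


noncomputable def qvec : (GC5C4.edgeSet → ℝ) × ℝ :=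
  ((3/8 : ℝ) • rGen (∅ : Set (Fin 6))) + ((1/8 : ℝ) • rGen ({1} : Set (Fin 6))) + ((1/8 : ℝ) • rGen ({3} : Set (Fin 6))) + ((1/8 : ℝ) • rGen ({0, 3} : Set (Fin 6))) + ((1/8 : ℝ) • rGen ({2, 3} : Set (Fin 6))) + ((1/4 : ℝ) • rGen ({0, 2, 3} : Set (Fin 6))) + ((1/8 : ℝ) • rGen ({1, 2, 3} : Set (Fin 6))) + ((1/8 : ℝ) • rGen ({4} : Set (Fin 6))) + ((1/8 : ℝ) • rGen ({0, 1, 4} : Set (Fin 6))) + ((1/4 : ℝ) • rGen ({0, 1, 2, 4} : Set (Fin 6))) + ((1/4 : ℝ) • rGen ({3, 4} : Set (Fin 6)))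


lemma qvec_mem : qvec ∈ AddSubmonoid.closure (cutConeGens GC5C4) := by
  unfold qvec
  repeat' refine AddSubmonoid.add_mem _ ?_ ?_
  all_goals exact rGen_mem_cone (by norm_num) _


noncomputable def phi0 (r : (GC5C4.edgeSet → ℝ) × ℝ) : ℝ :=
  (-1/2 : ℝ) * r.1 GE1 + (-1/2 : ℝ) * r.1 GE2 + (-1 : ℝ) * r.1 GE4 + (1/2 : ℝ) * r.1 GE6 + (1/2 : ℝ) * r.1 GE7 + r.2


noncomputable def phi1 (r : (GC5C4.edgeSet → ℝ) × ℝ) : ℝ :=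
  (1/2 : ℝ) * r.1 GE1 + (1/2 : ℝ) * r.1 GE2 + (-1/2 : ℝ) * r.1 GE6 + (-1/2 : ℝ) * r.1 GE7


noncomputable def phi2 (r : (GC5C4.edgeSet → ℝ) × ℝ) : ℝ :=
  (1/2 : ℝ) * r.1 GE3 + (1/2 : ℝ) * r.1 GE4 + (-1/2 : ℝ) * r.1 GE5 + (-1/2 : ℝ) * r.1 GE6 + (-1/2 : ℝ) * r.1 GE7


noncomputable def phi3 (r : (GC5C4.edgeSet → ℝ) × ℝ) : ℝ :=
  (1/2 : ℝ) * r.1 GE3 + (-1/2 : ℝ) * r.1 GE4 + (1/2 : ℝ) * r.1 GE5 + (1/2 : ℝ) * r.1 GE6 + (1/2 : ℝ) * r.1 GE7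


noncomputable def phi4 (r : (GC5C4.edgeSet → ℝ) × ℝ) : ℝ :=
  (-1/2 : ℝ) * r.1 GE1 + (1/2 : ℝ) * r.1 GE2 + (1/2 : ℝ) * r.1 GE3 + (-1/2 : ℝ) * r.1 GE4 + (1/2 : ℝ) * r.1 GE5 + r.1 GE7


noncomputable def phi5 (r : (GC5C4.edgeSet → ℝ) × ℝ) : ℝ :=
  (1/2 : ℝ) * r.1 GE1 + (-1/2 : ℝ) * r.1 GE2 + (-1/2 : ℝ) * r.1 GE3 + (1/2 : ℝ) * r.1 GE4 + (-1/2 : ℝ) * r.1 GE5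


noncomputable def phi6 (r : (GC5C4.edgeSet → ℝ) × ℝ) : ℝ :=
  (-1/2 : ℝ) * r.1 GE3 + (1/2 : ℝ) * r.1 GE4 + (1/2 : ℝ) * r.1 GE5 + (-1/2 : ℝ) * r.1 GE6 + (-1/2 : ℝ) * r.1 GE7


noncomputable def phi7 (r : (GC5C4.edgeSet → ℝ) × ℝ) : ℝ :=
  (-1/2 : ℝ) * r.1 GE3 + (1/2 : ℝ) * r.1 GE4 + (-1/2 : ℝ) * r.1 GE5 + (1/2 : ℝ) * r.1 GE6 + (-1/2 : ℝ) * r.1 GE7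


lemma recon (r : (GC5C4.edgeSet → ℝ) × ℝ) :
    phi0 r • rGen (∅ : Set (Fin 6)) + phi1 r • rGen ({1} : Set (Fin 6)) + phi2 r • rGen ({3} : Set (Fin 6)) + phi3 r • rGen ({0, 3} : Set (Fin 6)) + phi4 r • rGen ({2, 3} : Set (Fin 6)) + phi5 r • rGen ({1, 2, 3} : Set (Fin 6)) + phi6 r • rGen ({4} : Set (Fin 6)) + phi7 r • rGen ({0, 1, 4} : Set (Fin 6)) = r := by
  refine Prod.ext ?_ ?_
  · funext e
    simp only [Prod.fst_add, Pi.add_apply, Prod.smul_fst, Pi.smul_apply, smul_eq_mul, rGen]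
    rcases edge_cases e.1 e.2 with h | h | h | h | h | h | h
    · rw [show e = GE1 from Subtype.ext h]
      simp only [GE1_val, GE2_val, GE3_val, GE4_val, GE5_val, GE6_val, GE7_val, phi0, phi1, phi2, phi3, phi4, phi5, phi6, phi7, cv_empty_1, cv_empty_2, cv_empty_3, cv_empty_4, cv_empty_5, cv_empty_6, cv_empty_7, cv_s1_1, cv_s1_2, cv_s1_3, cv_s1_4, cv_s1_5, cv_s1_6, cv_s1_7, cv_s3_1, cv_s3_2, cv_s3_3, cv_s3_4, cv_s3_5, cv_s3_6, cv_s3_7, cv_s4_1, cv_s4_2, cv_s4_3, cv_s4_4, cv_s4_5, cv_s4_6, cv_s4_7, cv_s03_1, cv_s03_2, cv_s03_3, cv_s03_4, cv_s03_5, cv_s03_6, cv_s03_7, cv_s23_1, cv_s23_2, cv_s23_3, cv_s23_4, cv_s23_5, cv_s23_6, cv_s23_7, cv_s34_1, cv_s34_2, cv_s34_3, cv_s34_4, cv_s34_5, cv_s34_6, cv_s34_7, cv_s15_1, cv_s15_2, cv_s15_3, cv_s15_4, cv_s15_5, cv_s15_6, cv_s15_7, cv_s123_1, cv_s123_2, cv_s123_3,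 cv_s123_4, cv_s123_5, cv_s123_6, cv_s123_7, cv_s023_1, cv_s023_2, cv_s023_3, cv_s023_4, cv_s023_5, cv_s023_6, cv_s023_7, cv_s014_1, cv_s014_2, cv_s014_3, cv_s014_4, cv_s014_5, cv_s014_6, cv_s014_7, cv_s0124_1, cv_s0124_2, cv_s0124_3, cv_s0124_4, cv_s0124_5, cv_s0124_6, cv_s0124_7]
      push_cast
      ring
    · rw [show e = GE2 from Subtype.ext h]
      simp only [GE1_val, GE2_val, GE3_val, GE4_val, GE5_val, GE6_val, GE7_val, phi0, phi1, phi2, phi3, phi4, phi5, phi6, phi7, cv_empty_1, cv_empty_2, cv_empty_3, cv_empty_4, cv_empty_5, cv_empty_6, cv_empty_7, cv_s1_1, cv_s1_2, cv_s1_3, cv_s1_4, cv_s1_5, cv_s1_6, cv_s1_7, cv_s3_1, cv_s3_2, cv_s3_3, cv_s3_4, cv_s3_5, cv_s3_6, cv_s3_7, cv_s4_1, cv_s4_2, cv_s4_3, cv_s4_4, cv_s4_5, cv_s4_6, cv_s4_7, cv_s03_1, cv_s03_2, cv_s03_3, cv_s03_4, cv_s03_5, cv_s03_6, cv_s03_7,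 cv_s23_1, cv_s23_2, cv_s23_3, cv_s23_4, cv_s23_5, cv_s23_6, cv_s23_7, cv_s34_1, cv_s34_2, cv_s34_3, cv_s34_4, cv_s34_5, cv_s34_6, cv_s34_7, cv_s15_1, cv_s15_2, cv_s15_3, cv_s15_4, cv_s15_5, cv_s15_6, cv_s15_7, cv_s123_1, cv_s123_2, cv_s123_3, cv_s123_4, cv_s123_5, cv_s123_6, cv_s123_7, cv_s023_1, cv_s023_2, cv_s023_3, cv_s023_4, cv_s023_5, cv_s023_6, cv_s023_7, cv_s014_1, cv_s014_2, cv_s014_3, cv_s014_4, cv_s014_5, cv_s014_6, cv_s014_7, cv_s0124_1, cv_s0124_2, cv_s0124_3, cv_s0124_4, cv_s0124_5, cv_s0124_6, cv_s0124_7]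
      push_cast
      ring
    · rw [show e = GE3 from Subtype.ext h]
      simp only [GE1_val, GE2_val, GE3_val, GE4_val, GE5_val, GE6_val, GE7_val, phi0, phi1, phi2, phi3, phi4, phi5, phi6, phi7, cv_empty_1, cv_empty_2, cv_empty_3, cv_empty_4, cv_empty_5, cv_empty_6, cv_empty_7, cv_s1_1, cv_s1_2, cv_s1_3, cv_s1_4, cv_s1_5, cv_s1_6, cv_s1_7, cv_s3_1, cv_s3_2, cv_s3_3, cv_s3_4, cv_s3_5, cv_s3_6, cv_s3_7, cv_s4_1, cv_s4_2, cv_s4_3, cv_s4_4, cv_s4_5, cv_s4_6, cv_s4_7, cv_s03_1, cv_s03_2, cv_s03_3, cv_s03_4, cv_s03_5, cv_s03_6, cv_s03_7, cv_s23_1, cv_s23_2, cv_s23_3, cv_s23_4, cv_s23_5, cv_s23_6, cv_s23_7, cv_s34_1, cv_s34_2, cv_s34_3, cv_s34_4, cv_s34_5, cv_s34_6, cv_s34_7, cv_s15_1, cv_s15_2, cv_s15_3, cv_s15_4, cv_s15_5, cv_s15_6, cv_s15_7, cv_s123_1, cv_s123_2, cv_s123_3, cv_s123_4, cv_s123_5,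 cv_s123_6, cv_s123_7, cv_s023_1, cv_s023_2, cv_s023_3, cv_s023_4, cv_s023_5, cv_s023_6, cv_s023_7, cv_s014_1, cv_s014_2, cv_s014_3, cv_s014_4, cv_s014_5, cv_s014_6, cv_s014_7, cv_s0124_1, cv_s0124_2, cv_s0124_3, cv_s0124_4, cv_s0124_5, cv_s0124_6, cv_s0124_7]
      push_cast
      ring
    · rw [show e = GE4 from Subtype.ext h]
      simp only [GE1_val, GE2_val, GE3_val, GE4_val, GE5_val, GE6_val, GE7_val, phi0, phi1, phi2, phi3, phi4, phi5, phi6, phi7, cv_empty_1, cv_empty_2, cv_empty_3, cv_empty_4, cv_empty_5, cv_empty_6, cv_empty_7, cv_s1_1, cv_s1_2, cv_s1_3, cv_s1_4, cv_s1_5, cv_s1_6, cv_s1_7, cv_s3_1, cv_s3_2, cv_s3_3, cv_s3_4, cv_s3_5, cv_s3_6, cv_s3_7, cv_s4_1, cv_s4_2, cv_s4_3, cv_s4_4, cv_s4_5, cv_s4_6, cv_s4_7, cv_s03_1, cv_s03_2, cv_s03_3, cv_s03_4, cv_s03_5, cv_s03_6, cv_s03_7, cv_s23_1, cv_s23_2,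 cv_s23_3, cv_s23_4, cv_s23_5, cv_s23_6, cv_s23_7, cv_s34_1, cv_s34_2, cv_s34_3, cv_s34_4, cv_s34_5, cv_s34_6, cv_s34_7, cv_s15_1, cv_s15_2, cv_s15_3, cv_s15_4, cv_s15_5, cv_s15_6, cv_s15_7, cv_s123_1, cv_s123_2, cv_s123_3, cv_s123_4, cv_s123_5, cv_s123_6, cv_s123_7, cv_s023_1, cv_s023_2, cv_s023_3, cv_s023_4, cv_s023_5, cv_s023_6, cv_s023_7, cv_s014_1, cv_s014_2, cv_s014_3, cv_s014_4, cv_s014_5, cv_s014_6, cv_s014_7, cv_s0124_1, cv_s0124_2, cv_s0124_3, cv_s0124_4, cv_s0124_5, cv_s0124_6, cv_s0124_7]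
      push_cast
      ring
    · rw [show e = GE5 from Subtype.ext h]
      simp only [GE1_val, GE2_val, GE3_val, GE4_val, GE5_val, GE6_val, GE7_val, phi0, phi1, phi2, phi3, phi4, phi5, phi6, phi7, cv_empty_1, cv_empty_2, cv_empty_3, cv_empty_4, cv_empty_5, cv_empty_6, cv_empty_7, cv_s1_1, cv_s1_2, cv_s1_3, cv_s1_4, cv_s1_5, cv_s1_6, cv_s1_7, cv_s3_1, cv_s3_2, cv_s3_3, cv_s3_4, cv_s3_5, cv_s3_6, cv_s3_7, cv_s4_1, cv_s4_2, cv_s4_3, cv_s4_4, cv_s4_5, cv_s4_6, cv_s4_7, cv_s03_1, cv_s03_2, cv_s03_3, cv_s03_4, cv_s03_5, cv_s03_6, cv_s03_7, cv_s23_1, cv_s23_2, cv_s23_3, cv_s23_4, cv_s23_5, cv_s23_6, cv_s23_7, cv_s34_1, cv_s34_2, cv_s34_3, cv_s34_4, cv_s34_5, cv_s34_6, cv_s34_7, cv_s15_1, cv_s15_2, cv_s15_3, cv_s15_4, cv_s15_5, cv_s15_6, cv_s15_7, cv_s123_1, cv_s123_2, cv_s123_3, cv_s123_4, cv_s123_5,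 cv_s123_6, cv_s123_7, cv_s023_1, cv_s023_2, cv_s023_3, cv_s023_4, cv_s023_5, cv_s023_6, cv_s023_7, cv_s014_1, cv_s014_2, cv_s014_3, cv_s014_4, cv_s014_5, cv_s014_6, cv_s014_7, cv_s0124_1, cv_s0124_2, cv_s0124_3, cv_s0124_4, cv_s0124_5, cv_s0124_6, cv_s0124_7]
      push_cast
      ring
    · rw [show e = GE6 from Subtype.ext h]
      simp only [GE1_val, GE2_val, GE3_val, GE4_val, GE5_val, GE6_val, GE7_val, phi0, phi1, phi2, phi3, phi4, phi5, phi6, phi7, cv_empty_1, cv_empty_2, cv_empty_3, cv_empty_4, cv_empty_5, cv_empty_6, cv_empty_7, cv_s1_1, cv_s1_2, cv_s1_3, cv_s1_4, cv_s1_5, cv_s1_6, cv_s1_7, cv_s3_1, cv_s3_2, cv_s3_3, cv_s3_4, cv_s3_5, cv_s3_6, cv_s3_7, cv_s4_1, cv_s4_2, cv_s4_3, cv_s4_4, cv_s4_5, cv_s4_6, cv_s4_7, cv_s03_1, cv_s03_2, cv_s03_3, cv_s03_4, cv_s03_5, cv_s03_6, cv_s03_7, cv_s23_1, cv_s23_2,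 cv_s23_3, cv_s23_4, cv_s23_5, cv_s23_6, cv_s23_7, cv_s34_1, cv_s34_2, cv_s34_3, cv_s34_4, cv_s34_5, cv_s34_6, cv_s34_7, cv_s15_1, cv_s15_2, cv_s15_3, cv_s15_4, cv_s15_5, cv_s15_6, cv_s15_7, cv_s123_1, cv_s123_2, cv_s123_3, cv_s123_4, cv_s123_5, cv_s123_6, cv_s123_7, cv_s023_1, cv_s023_2, cv_s023_3, cv_s023_4, cv_s023_5, cv_s023_6, cv_s023_7, cv_s014_1, cv_s014_2, cv_s014_3, cv_s014_4, cv_s014_5, cv_s014_6, cv_s014_7, cv_s0124_1, cv_s0124_2, cv_s0124_3, cv_s0124_4, cv_s0124_5, cv_s0124_6, cv_s0124_7]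
      push_cast
      ring
    · rw [show e = GE7 from Subtype.ext h]
      simp only [GE1_val, GE2_val, GE3_val, GE4_val, GE5_val, GE6_val, GE7_val, phi0, phi1, phi2, phi3, phi4, phi5, phi6, phi7, cv_empty_1, cv_empty_2, cv_empty_3, cv_empty_4, cv_empty_5, cv_empty_6, cv_empty_7, cv_s1_1, cv_s1_2, cv_s1_3, cv_s1_4, cv_s1_5, cv_s1_6, cv_s1_7, cv_s3_1, cv_s3_2, cv_s3_3, cv_s3_4, cv_s3_5, cv_s3_6, cv_s3_7, cv_s4_1, cv_s4_2, cv_s4_3, cv_s4_4, cv_s4_5, cv_s4_6, cv_s4_7, cv_s03_1, cv_s03_2, cv_s03_3, cv_s03_4, cv_s03_5, cv_s03_6, cv_s03_7, cv_s23_1, cv_s23_2, cv_s23_3, cv_s23_4, cv_s23_5, cv_s23_6, cv_s23_7, cv_s34_1, cv_s34_2, cv_s34_3, cv_s34_4, cv_s34_5, cv_s34_6, cv_s34_7, cv_s15_1, cv_s15_2, cv_s15_3, cv_s15_4, cv_s15_5, cv_s15_6, cv_s15_7, cv_s123_1, cv_s123_2, cv_s123_3, cv_s123_4, cv_s123_5,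 cv_s123_6, cv_s123_7, cv_s023_1, cv_s023_2, cv_s023_3, cv_s023_4, cv_s023_5, cv_s023_6, cv_s023_7, cv_s014_1, cv_s014_2, cv_s014_3, cv_s014_4, cv_s014_5, cv_s014_6, cv_s014_7, cv_s0124_1, cv_s0124_2, cv_s0124_3, cv_s0124_4, cv_s0124_5, cv_s0124_6, cv_s0124_7]
      push_cast
      ring
  · simp only [Prod.snd_add, Prod.smul_snd, smul_eq_mul, rGen, phi0, phi1, phi2, phi3, phi4, phi5, phi6, phi7, mul_one]
    ring


noncomputable def pInt : (GC5C4.edgeSet → ℤ) × ℤ :=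
  (fun e => if e.1 = s((3 : Fin 6), (4 : Fin 6)) then (2 : ℤ) else 1, (3 : ℤ))


lemma qval_1 : qvec.1 GE1 = (5/8 : ℝ) := by
  simp only [qvec, Prod.fst_add, Pi.add_apply, Prod.smul_fst, Pi.smul_apply, smul_eq_mul,
    rGen, GE1_val, cv_empty_1, cv_empty_2, cv_empty_3, cv_empty_4, cv_empty_5, cv_empty_6, cv_empty_7, cv_s1_1, cv_s1_2, cv_s1_3, cv_s1_4, cv_s1_5, cv_s1_6, cv_s1_7, cv_s3_1, cv_s3_2, cv_s3_3, cv_s3_4, cv_s3_5, cv_s3_6, cv_s3_7, cv_s4_1, cv_s4_2, cv_s4_3, cv_s4_4, cv_s4_5, cv_s4_6, cv_s4_7, cv_s03_1, cv_s03_2, cv_s03_3, cv_s03_4, cv_s03_5, cv_s03_6, cv_s03_7, cv_s23_1, cv_s23_2, cv_s23_3, cv_s23_4, cv_s23_5, cv_s23_6, cv_s23_7, cv_s34_1, cv_s34_2, cv_s34_3, cv_s34_4, cv_s34_5, cv_s34_6, cv_s34_7, cv_s15_1, cv_s15_2, cv_s15_3, cv_s15_4, cv_s15_5, cv_s15_6,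 cv_s15_7, cv_s123_1, cv_s123_2, cv_s123_3, cv_s123_4, cv_s123_5, cv_s123_6, cv_s123_7, cv_s023_1, cv_s023_2, cv_s023_3, cv_s023_4, cv_s023_5, cv_s023_6, cv_s023_7, cv_s014_1, cv_s014_2, cv_s014_3, cv_s014_4, cv_s014_5, cv_s014_6, cv_s014_7, cv_s0124_1, cv_s0124_2, cv_s0124_3, cv_s0124_4, cv_s0124_5, cv_s0124_6, cv_s0124_7]
  norm_num


lemma qval_2 : qvec.1 GE2 = (5/8 : ℝ) := by
  simp only [qvec, Prod.fst_add, Pi.add_apply, Prod.smul_fst, Pi.smul_apply, smul_eq_mul,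
    rGen, GE2_val, cv_empty_1, cv_empty_2, cv_empty_3, cv_empty_4, cv_empty_5, cv_empty_6, cv_empty_7, cv_s1_1, cv_s1_2, cv_s1_3, cv_s1_4, cv_s1_5, cv_s1_6, cv_s1_7, cv_s3_1, cv_s3_2, cv_s3_3, cv_s3_4, cv_s3_5, cv_s3_6, cv_s3_7, cv_s4_1, cv_s4_2, cv_s4_3, cv_s4_4, cv_s4_5, cv_s4_6, cv_s4_7, cv_s03_1, cv_s03_2, cv_s03_3, cv_s03_4, cv_s03_5, cv_s03_6, cv_s03_7, cv_s23_1, cv_s23_2, cv_s23_3, cv_s23_4, cv_s23_5, cv_s23_6, cv_s23_7, cv_s34_1, cv_s34_2, cv_s34_3, cv_s34_4, cv_s34_5, cv_s34_6, cv_s34_7, cv_s15_1, cv_s15_2, cv_s15_3, cv_s15_4, cv_s15_5, cv_s15_6, cv_s15_7, cv_s123_1, cv_s123_2, cv_s123_3, cv_s123_4, cv_s123_5, cv_s123_6, cv_s123_7, cv_s023_1, cv_s023_2, cv_s023_3, cv_s023_4, cv_s023_5, cv_s023_6, cv_s023_7, cv_s014_1, cv_s014_2, cv_s014_3, cv_s014_4,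 cv_s014_5, cv_s014_6, cv_s014_7, cv_s0124_1, cv_s0124_2, cv_s0124_3, cv_s0124_4, cv_s0124_5, cv_s0124_6, cv_s0124_7]
  norm_num


lemma qval_3 : qvec.1 GE3 = (3/4 : ℝ) := by
  simp only [qvec, Prod.fst_add, Pi.add_apply, Prod.smul_fst, Pi.smul_apply, smul_eq_mul,
    rGen, GE3_val, cv_empty_1, cv_empty_2, cv_empty_3, cv_empty_4, cv_empty_5, cv_empty_6, cv_empty_7, cv_s1_1, cv_s1_2, cv_s1_3, cv_s1_4, cv_s1_5, cv_s1_6, cv_s1_7, cv_s3_1, cv_s3_2, cv_s3_3, cv_s3_4, cv_s3_5, cv_s3_6, cv_s3_7, cv_s4_1, cv_s4_2, cv_s4_3, cv_s4_4, cv_s4_5, cv_s4_6, cv_s4_7, cv_s03_1, cv_s03_2, cv_s03_3, cv_s03_4, cv_s03_5, cv_s03_6, cv_s03_7, cv_s23_1, cv_s23_2, cv_s23_3, cv_s23_4, cv_s23_5, cv_s23_6, cv_s23_7, cv_s34_1, cv_s34_2, cv_s34_3, cv_s34_4, cv_s34_5, cv_s34_6, cv_s34_7, cv_s15_1, cv_s15_2,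 cv_s15_3, cv_s15_4, cv_s15_5, cv_s15_6, cv_s15_7, cv_s123_1, cv_s123_2, cv_s123_3, cv_s123_4, cv_s123_5, cv_s123_6, cv_s123_7, cv_s023_1, cv_s023_2, cv_s023_3, cv_s023_4, cv_s023_5, cv_s023_6, cv_s023_7, cv_s014_1, cv_s014_2, cv_s014_3, cv_s014_4, cv_s014_5, cv_s014_6, cv_s014_7, cv_s0124_1, cv_s0124_2, cv_s0124_3, cv_s0124_4, cv_s0124_5, cv_s0124_6, cv_s0124_7]
  norm_num


lemma qval_4 : qvec.1 GE4 = (5/4 : ℝ) := by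
  simp only [qvec, Prod.fst_add, Pi.add_apply, Prod.smul_fst, Pi.smul_apply, smul_eq_mul,
    rGen, GE4_val, cv_empty_1, cv_empty_2, cv_empty_3, cv_empty_4, cv_empty_5, cv_empty_6, cv_empty_7, cv_s1_1, cv_s1_2, cv_s1_3, cv_s1_4, cv_s1_5, cv_s1_6, cv_s1_7, cv_s3_1, cv_s3_2, cv_s3_3, cv_s3_4, cv_s3_5, cv_s3_6, cv_s3_7, cv_s4_1, cv_s4_2, cv_s4_3, cv_s4_4, cv_s4_5, cv_s4_6, cv_s4_7, cv_s03_1, cv_s03_2, cv_s03_3, cv_s03_4, cv_s03_5, cv_s03_6, cv_s03_7, cv_s23_1, cv_s23_2, cv_s23_3, cv_s23_4, cv_s23_5, cv_s23_6, cv_s23_7, cv_s34_1, cv_s34_2, cv_s34_3, cv_s34_4, cv_s34_5, cv_s34_6, cv_s34_7, cv_s15_1, cv_s15_2, cv_s15_3, cv_s15_4, cv_s15_5, cv_s15_6, cv_s15_7, cv_s123_1, cv_s123_2, cv_s123_3, cv_s123_4, cv_s123_5, cv_s123_6, cv_s123_7, cv_s023_1, cv_s023_2, cv_s023_3, cv_s023_4,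 cv_s023_5, cv_s023_6, cv_s023_7, cv_s014_1, cv_s014_2, cv_s014_3, cv_s014_4, cv_s014_5, cv_s014_6, cv_s014_7, cv_s0124_1, cv_s0124_2, cv_s0124_3, cv_s0124_4, cv_s0124_5, cv_s0124_6, cv_s0124_7]
  norm_num


lemma qval_5 : qvec.1 GE5 = (3/4 : ℝ) := by
  simp only [qvec, Prod.fst_add, Pi.add_apply, Prod.smul_fst, Pi.smul_apply, smul_eq_mul,
    rGen, GE5_val, cv_empty_1, cv_empty_2, cv_empty_3, cv_empty_4, cv_empty_5, cv_empty_6, cv_empty_7, cv_s1_1, cv_s1_2, cv_s1_3, cv_s1_4, cv_s1_5, cv_s1_6, cv_s1_7, cv_s3_1, cv_s3_2, cv_s3_3, cv_s3_4, cv_s3_5, cv_s3_6, cv_s3_7, cv_s4_1, cv_s4_2, cv_s4_3, cv_s4_4, cv_s4_5, cv_s4_6, cv_s4_7, cv_s03_1, cv_s03_2, cv_s03_3, cv_s03_4, cv_s03_5, cv_s03_6, cv_s03_7, cv_s23_1, cv_s23_2, cv_s23_3, cv_s23_4, cv_s23_5, cv_s23_6, cv_s23_7, cv_s34_1, cv_s34_2,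 cv_s34_3, cv_s34_4, cv_s34_5, cv_s34_6, cv_s34_7, cv_s15_1, cv_s15_2, cv_s15_3, cv_s15_4, cv_s15_5, cv_s15_6, cv_s15_7, cv_s123_1, cv_s123_2, cv_s123_3, cv_s123_4, cv_s123_5, cv_s123_6, cv_s123_7, cv_s023_1, cv_s023_2, cv_s023_3, cv_s023_4, cv_s023_5, cv_s023_6, cv_s023_7, cv_s014_1, cv_s014_2, cv_s014_3, cv_s014_4, cv_s014_5, cv_s014_6, cv_s014_7, cv_s0124_1, cv_s0124_2, cv_s0124_3, cv_s0124_4, cv_s0124_5, cv_s0124_6, cv_s0124_7]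
  norm_num


lemma qval_6 : qvec.1 GE6 = (3/4 : ℝ) := by
  simp only [qvec, Prod.fst_add, Pi.add_apply, Prod.smul_fst, Pi.smul_apply, smul_eq_mul,
    rGen, GE6_val, cv_empty_1, cv_empty_2, cv_empty_3, cv_empty_4, cv_empty_5, cv_empty_6, cv_empty_7, cv_s1_1, cv_s1_2, cv_s1_3, cv_s1_4, cv_s1_5, cv_s1_6, cv_s1_7, cv_s3_1, cv_s3_2, cv_s3_3, cv_s3_4, cv_s3_5, cv_s3_6, cv_s3_7, cv_s4_1, cv_s4_2, cv_s4_3, cv_s4_4, cv_s4_5, cv_s4_6, cv_s4_7, cv_s03_1, cv_s03_2, cv_s03_3, cv_s03_4, cv_s03_5, cv_s03_6, cv_s03_7, cv_s23_1, cv_s23_2, cv_s23_3, cv_s23_4, cv_s23_5, cv_s23_6, cv_s23_7, cv_s34_1, cv_s34_2, cv_s34_3, cv_s34_4, cv_s34_5, cv_s34_6, cv_s34_7, cv_s15_1, cv_s15_2, cv_s15_3, cv_s15_4, cv_s15_5, cv_s15_6, cv_s15_7, cv_s123_1, cv_s123_2, cv_s123_3, cv_s123_4, cv_s123_5, cv_s123_6,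 cv_s123_7, cv_s023_1, cv_s023_2, cv_s023_3, cv_s023_4, cv_s023_5, cv_s023_6, cv_s023_7, cv_s014_1, cv_s014_2, cv_s014_3, cv_s014_4, cv_s014_5, cv_s014_6, cv_s014_7, cv_s0124_1, cv_s0124_2, cv_s0124_3, cv_s0124_4, cv_s0124_5, cv_s0124_6, cv_s0124_7]
  norm_num


lemma qval_7 : qvec.1 GE7 = (3/4 : ℝ) := by
  simp only [qvec, Prod.fst_add, Pi.add_apply, Prod.smul_fst, Pi.smul_apply, smul_eq_mul,
    rGen, GE7_val, cv_empty_1, cv_empty_2, cv_empty_3, cv_empty_4, cv_empty_5, cv_empty_6, cv_empty_7, cv_s1_1, cv_s1_2, cv_s1_3, cv_s1_4, cv_s1_5, cv_s1_6, cv_s1_7, cv_s3_1, cv_s3_2, cv_s3_3, cv_s3_4, cv_s3_5, cv_s3_6, cv_s3_7, cv_s4_1, cv_s4_2, cv_s4_3, cv_s4_4, cv_s4_5, cv_s4_6, cv_s4_7, cv_s03_1, cv_s03_2, cv_s03_3, cv_s03_4, cv_s03_5, cv_s03_6, cv_s03_7, cv_s23_1, cv_s23_2, cv_s23_3, cv_s23_4,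 cv_s23_5, cv_s23_6, cv_s23_7, cv_s34_1, cv_s34_2, cv_s34_3, cv_s34_4, cv_s34_5, cv_s34_6, cv_s34_7, cv_s15_1, cv_s15_2, cv_s15_3, cv_s15_4, cv_s15_5, cv_s15_6, cv_s15_7, cv_s123_1, cv_s123_2, cv_s123_3, cv_s123_4, cv_s123_5, cv_s123_6, cv_s123_7, cv_s023_1, cv_s023_2, cv_s023_3, cv_s023_4, cv_s023_5, cv_s023_6, cv_s023_7, cv_s014_1, cv_s014_2, cv_s014_3, cv_s014_4, cv_s014_5, cv_s014_6, cv_s014_7, cv_s0124_1, cv_s0124_2, cv_s0124_3, cv_s0124_4, cv_s0124_5, cv_s0124_6, cv_s0124_7]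
  norm_num


lemma qval_a : qvec.2 = (2 : ℝ) := by
  simp only [qvec, Prod.snd_add, Prod.smul_snd, smul_eq_mul, rGen, mul_one]
  norm_num


lemma pval_1 : (toRealCut GC5C4 pInt).1 GE1 = (1 : ℝ) := by
  simp only [toRealCut, pInt, GE1_val]
  norm_num [Sym2.eq_iff]
  try decide


lemma pval_2 : (toRealCut GC5C4 pInt).1 GE2 = (1 : ℝ) := by
  simp only [toRealCut, pInt, GE2_val]
  norm_num [Sym2.eq_iff]
  try decide


lemma pval_3 : (toRealCut GC5C4 pInt).1 GE3 = (1 : ℝ) := by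
  simp only [toRealCut, pInt, GE3_val]
  norm_num [Sym2.eq_iff]
  try decide


lemma pval_4 : (toRealCut GC5C4 pInt).1 GE4 = (2 : ℝ) := by
  simp only [toRealCut, pInt, GE4_val]
  norm_num [Sym2.eq_iff]
  try decide


lemma pval_5 : (toRealCut GC5C4 pInt).1 GE5 = (1 : ℝ) := by
  simp only [toRealCut, pInt, GE5_val]
  norm_num [Sym2.eq_iff]
  try decide


lemma pval_6 : (toRealCut GC5C4 pInt).1 GE6 = (1 : ℝ) := by
  simp only [toRealCut, pInt, GE6_val]
  norm_num [Sym2.eq_iff]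
  try decide


lemma pval_7 : (toRealCut GC5C4 pInt).1 GE7 = (1 : ℝ) := by
  simp only [toRealCut, pInt, GE7_val]
  norm_num [Sym2.eq_iff]
  try decide


lemma pval_a : (toRealCut GC5C4 pInt).2 = (3 : ℝ) := by
  simp only [toRealCut, pInt]; norm_num


lemma dpos_0 : 0 < phi0 (toRealCut GC5C4 pInt - qvec) := by
  simp only [phi0, Prod.fst_sub, Pi.sub_apply, Prod.snd_sub, qval_1, qval_2, qval_3, qval_4, qval_5, qval_6, qval_7, pval_1, pval_2, pval_3, pval_4, pval_5, pval_6, pval_7, qval_a, pval_a]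
  norm_num


lemma dpos_1 : 0 < phi1 (toRealCut GC5C4 pInt - qvec) := by
  simp only [phi1, Prod.fst_sub, Pi.sub_apply, Prod.snd_sub, qval_1, qval_2, qval_3, qval_4, qval_5, qval_6, qval_7, pval_1, pval_2, pval_3, pval_4, pval_5, pval_6, pval_7, qval_a, pval_a]
  norm_num


lemma dpos_2 : 0 < phi2 (toRealCut GC5C4 pInt - qvec) := by
  simp only [phi2, Prod.fst_sub, Pi.sub_apply, Prod.snd_sub, qval_1, qval_2, qval_3, qval_4, qval_5, qval_6, qval_7, pval_1, pval_2, pval_3, pval_4, pval_5, pval_6, pval_7, qval_a, pval_a]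
  norm_num


lemma dpos_3 : 0 < phi3 (toRealCut GC5C4 pInt - qvec) := by
  simp only [phi3, Prod.fst_sub, Pi.sub_apply, Prod.snd_sub, qval_1, qval_2, qval_3, qval_4, qval_5, qval_6, qval_7, pval_1, pval_2, pval_3, pval_4, pval_5, pval_6, pval_7, qval_a, pval_a]
  norm_num


lemma dpos_4 : 0 < phi4 (toRealCut GC5C4 pInt - qvec) := by
  simp only [phi4, Prod.fst_sub, Pi.sub_apply, Prod.snd_sub, qval_1, qval_2, qval_3, qval_4, qval_5, qval_6, qval_7, pval_1, pval_2, pval_3, pval_4, pval_5, pval_6, pval_7, qval_a, pval_a]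
  norm_num


lemma dpos_5 : 0 < phi5 (toRealCut GC5C4 pInt - qvec) := by
  simp only [phi5, Prod.fst_sub, Pi.sub_apply, Prod.snd_sub, qval_1, qval_2, qval_3, qval_4, qval_5, qval_6, qval_7, pval_1, pval_2, pval_3, pval_4, pval_5, pval_6, pval_7, qval_a, pval_a]
  norm_num


lemma dpos_6 : 0 < phi6 (toRealCut GC5C4 pInt - qvec) := by
  simp only [phi6, Prod.fst_sub, Pi.sub_apply, Prod.snd_sub, qval_1, qval_2, qval_3, qval_4, qval_5, qval_6, qval_7, pval_1, pval_2, pval_3, pval_4, pval_5, pval_6, pval_7, qval_a, pval_a]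
  norm_num


lemma dpos_7 : 0 < phi7 (toRealCut GC5C4 pInt - qvec) := by
  simp only [phi7, Prod.fst_sub, Pi.sub_apply, Prod.snd_sub, qval_1, qval_2, qval_3, qval_4, qval_5, qval_6, qval_7, pval_1, pval_2, pval_3, pval_4, pval_5, pval_6, pval_7, qval_a, pval_a]
  norm_num


lemma cutMonoid_decomp {G : SimpleGraph V} {p : (G.edgeSet → ℤ) × ℤ}
    (hp : p ∈ cutMonoid G) :
    ∃ l : List (Set V),
      p = (fun e => (l.map (fun A => cutVec A e.1)).sum, (l.length : ℤ)) := by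
  refine AddSubmonoid.closure_induction
    (motive := fun x _ => ∃ l : List (Set V),
      x = (fun e => (l.map (fun A => cutVec A e.1)).sum, (l.length : ℤ))) ?_ ?_ ?_ hp
  · rintro x ⟨A, rfl⟩
    exact ⟨[A], by refine Prod.ext ?_ ?_ <;> simp⟩
  · exact ⟨[], rfl⟩
  · rintro x y _ _ ⟨l1, rfl⟩ ⟨l2, rfl⟩
    refine ⟨l1 ++ l2, ?_⟩
    refine Prod.ext ?_ ?_
    · funext e; simp [List.sum_append]
    · simp only [Prod.mk_add_mk, List.length_append]; push_cast; ring


end Aux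

/-- For `G = C₅ #_{P₂} C₄`, the element `(1,1,1,2,1,1,1,3)` lies in
`int(M_G)` and `m(G) = 3`. -/
theorem c5_p2_c4_m :
    (((fun e => if e.1 = s((3 : Fin 6), (4 : Fin 6)) then (2 : ℤ) else 1, (3 : ℤ)) :
        (GC5C4.edgeSet → ℤ) × ℤ) ∈ cutInterior GC5C4) ∧
    IsLeast (cutDegrees GC5C4) 3 := by
  have hpmem : pInt ∈ cutMonoid GC5C4 := by
    have hpeq : pInt = ((fun e => cutVec ({3} : Set (Fin 6)) e.1, 1) :
        (GC5C4.edgeSet → ℤ) × ℤ) + ((fun e => cutVec ({4} : Set (Fin 6)) e.1, 1) +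
        (fun e => cutVec ({1, 5} : Set (Fin 6)) e.1, 1)) := by
      refine Prod.ext ?_ ?_
      · funext e
        rcases edge_cases e.1 e.2 with h | h | h | h | h | h | h <;>
          simp [pInt, h, Sym2.eq_iff, cv_empty_1, cv_empty_2, cv_empty_3, cv_empty_4, cv_empty_5, cv_empty_6, cv_empty_7, cv_s1_1, cv_s1_2, cv_s1_3, cv_s1_4, cv_s1_5, cv_s1_6, cv_s1_7, cv_s3_1, cv_s3_2, cv_s3_3, cv_s3_4, cv_s3_5, cv_s3_6, cv_s3_7, cv_s4_1, cv_s4_2, cv_s4_3, cv_s4_4, cv_s4_5, cv_s4_6, cv_s4_7, cv_s03_1, cv_s03_2, cv_s03_3, cv_s03_4, cv_s03_5, cv_s03_6, cv_s03_7, cv_s23_1, cv_s23_2, cv_s23_3, cv_s23_4, cv_s23_5, cv_s23_6, cv_s23_7, cv_s34_1, cv_s34_2, cv_s34_3, cv_s34_4, cv_s34_5, cv_s34_6, cv_s34_7, cv_s15_1, cv_s15_2, cv_s15_3, cv_s15_4, cv_s15_5, cv_s15_6, cv_s15_7, cv_s123_1, cv_s123_2, cv_s123_3, cv_s123_4, cv_s123_5,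 cv_s123_6, cv_s123_7, cv_s023_1, cv_s023_2, cv_s023_3, cv_s023_4, cv_s023_5, cv_s023_6, cv_s023_7, cv_s014_1, cv_s014_2, cv_s014_3, cv_s014_4, cv_s014_5, cv_s014_6, cv_s014_7, cv_s0124_1, cv_s0124_2, cv_s0124_3, cv_s0124_4, cv_s0124_5, cv_s0124_6, cv_s0124_7]
      · norm_num [pInt]
    rw [hpeq]
    exact AddSubmonoid.add_mem _ (AddSubmonoid.subset_closure ⟨{3}, rfl⟩)
      (AddSubmonoid.add_mem _ (AddSubmonoid.subset_closure ⟨{4}, rfl⟩)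
        (AddSubmonoid.subset_closure ⟨{1, 5}, rfl⟩))
  have hint : toRealCut GC5C4 pInt ∈ interior (cutCone GC5C4) := by
    rw [mem_interior]
    refine ⟨{r | 0 < phi0 (r - qvec) ∧ 0 < phi1 (r - qvec) ∧ 0 < phi2 (r - qvec) ∧
      0 < phi3 (r - qvec) ∧ 0 < phi4 (r - qvec) ∧ 0 < phi5 (r - qvec) ∧
      0 < phi6 (r - qvec) ∧ 0 < phi7 (r - qvec)}, ?_, ?_, ?_⟩
    · rintro r ⟨h0, h1, h2, h3, h4, h5, h6, h7⟩
      have hr := recon (r - qvec)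
      have hr2 : r = qvec + (r - qvec) := by abel
      rw [hr2]
      show _ ∈ AddSubmonoid.closure (cutConeGens GC5C4)
      refine AddSubmonoid.add_mem _ qvec_mem ?_
      rw [← hr]
      repeat' refine AddSubmonoid.add_mem _ ?_ ?_
      all_goals first
        | exact rGen_mem_cone h0.le _ | exact rGen_mem_cone h1.le _
        | exact rGen_mem_cone h2.le _ | exact rGen_mem_cone h3.le _
        | exact rGen_mem_cone h4.le _ | exact rGen_mem_cone h5.le _
        | exact rGen_mem_cone h6.le _ | exact rGen_mem_cone h7.le _
    · have c0 : Continuous fun r : (GC5C4.edgeSet → ℝ) × ℝ => phi0 (r - qvec) := by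
        unfold phi0; fun_prop
      have c1 : Continuous fun r : (GC5C4.edgeSet → ℝ) × ℝ => phi1 (r - qvec) := by
        unfold phi1; fun_prop
      have c2 : Continuous fun r : (GC5C4.edgeSet → ℝ) × ℝ => phi2 (r - qvec) := by
        unfold phi2; fun_prop
      have c3 : Continuous fun r : (GC5C4.edgeSet → ℝ) × ℝ => phi3 (r - qvec) := by
        unfold phi3; fun_prop
      have c4 : Continuous fun r : (GC5C4.edgeSet → ℝ) × ℝ => phi4 (r - qvec) := by
        unfold phi4; fun_prop
      have c5 : Continuous fun r : (GC5C4.edgeSet → ℝ) × ℝ => phi5 (r - qvec) := by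
        unfold phi5; fun_prop
      have c6 : Continuous fun r : (GC5C4.edgeSet → ℝ) × ℝ => phi6 (r - qvec) := by
        unfold phi6; fun_prop
      have c7 : Continuous fun r : (GC5C4.edgeSet → ℝ) × ℝ => phi7 (r - qvec) := by
        unfold phi7; fun_prop
      exact (isOpen_lt continuous_const c0).and ((isOpen_lt continuous_const c1).and ((isOpen_lt continuous_const c2).and ((isOpen_lt continuous_const c3).and ((isOpen_lt continuous_const c4).and ((isOpen_lt continuous_const c5).and ((isOpen_lt continuous_const c6).and (isOpen_lt continuous_const c7)))))))
    · exact ⟨dpos_0, dpos_1, dpos_2, dpos_3, dpos_4, dpos_5, dpos_6, dpos_7⟩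
  have hmain : pInt ∈ cutInterior GC5C4 := ⟨hpmem, hint⟩
  refine ⟨hmain, ⟨pInt.1, ?_⟩, ?_⟩
  · have h3 : ((pInt.1, ((3 : ℕ) : ℤ)) : (GC5C4.edgeSet → ℤ) × ℤ) = pInt :=
      Prod.ext rfl (by norm_num [pInt])
    rw [h3]
    exact hmain
  · intro b hb
    obtain ⟨x, hmem, hintx⟩ := hb
    by_contra hlt
    push_neg at hlt
    obtain ⟨l, hl⟩ := cutMonoid_decomp hmem
    have hxeq : x = fun e => (l.map (fun A => cutVec A e.1)).sum := congrArg Prod.fst hl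
    have hlen : ((b : ℕ) : ℤ) = (l.length : ℤ) := congrArg Prod.snd hl
    have hb' : b = l.length := by exact_mod_cast hlen
    interval_cases b
    · exact not_int_deg_zero (by simp [toRealCut]) hintx
    · rcases l with _ | ⟨A, _ | ⟨B, l'⟩⟩
      · rw [List.length_nil] at hb'; omega
      · have hx1 : ∀ e : GC5C4.edgeSet, x e = cutVec A e.1 := by
          intro e; rw [hxeq]; simp
        rcases cutVec_zero_or_one A s((0:Fin 6), 1) with h | h
        · refine not_int_edge_zero GE1 ?_ hintx
          simp only [toRealCut]
          rw [hx1 GE1]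
          simp only [GE1_val]
          rw [h]
          norm_num
        · refine not_int_edge_full GE1 ?_ hintx
          simp only [toRealCut]
          rw [hx1 GE1]
          simp only [GE1_val]
          rw [h]
          norm_num
      · rw [List.length_cons, List.length_cons] at hb'; omega
    · rcases l with _ | ⟨A, _ | ⟨B, _ | ⟨C, l'⟩⟩⟩
      · rw [List.length_nil] at hb'; omega
      · rw [List.length_cons, List.length_nil] at hb'; omega
      swap
      · rw [List.length_cons, List.length_cons, List.length_cons] at hb'; omega
      have hx2 : ∀ e : GC5C4.edgeSet, x e = cutVec A e.1 + cutVec B e.1 := by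
        intro e; rw [hxeq]; simp
      have key : ∀ u v : ℤ, u = 0 ∨ u = 1 → v = 0 ∨ v = 1 → ¬(u + v = 0) → ¬(u + v = 2) →
          u + v = 1 := by
        rintro u v (rfl | rfl) (rfl | rfl) <;> omega
      by_cases hz1 : cutVec A s((0:Fin 6), 1) + cutVec B s((0:Fin 6), 1) = 0
      · refine not_int_edge_zero GE1 ?_ hintx
        simp only [toRealCut]
        rw [hx2 GE1]
        simp only [GE1_val]
        rw [hz1]
        norm_num
      by_cases hf1 : cutVec A s((0:Fin 6), 1) + cutVec B s((0:Fin 6), 1) = 2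
      · refine not_int_edge_full GE1 ?_ hintx
        simp only [toRealCut]
        rw [hx2 GE1]
        simp only [GE1_val]
        rw [hf1]
        norm_num
      have h1 : cutVec A s((0:Fin 6), 1) + cutVec B s((0:Fin 6), 1) = 1 :=
        key _ _ (cutVec_zero_or_one _ _) (cutVec_zero_or_one _ _) hz1 hf1
      by_cases hz2 : cutVec A s((1:Fin 6), 2) + cutVec B s((1:Fin 6), 2) = 0
      · refine not_int_edge_zero GE2 ?_ hintx
        simp only [toRealCut]
        rw [hx2 GE2]
        simp only [GE2_val]
        rw [hz2]
        norm_num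
      by_cases hf2 : cutVec A s((1:Fin 6), 2) + cutVec B s((1:Fin 6), 2) = 2
      · refine not_int_edge_full GE2 ?_ hintx
        simp only [toRealCut]
        rw [hx2 GE2]
        simp only [GE2_val]
        rw [hf2]
        norm_num
      have h2 : cutVec A s((1:Fin 6), 2) + cutVec B s((1:Fin 6), 2) = 1 :=
        key _ _ (cutVec_zero_or_one _ _) (cutVec_zero_or_one _ _) hz2 hf2
      by_cases hz3 : cutVec A s((2:Fin 6), 3) + cutVec B s((2:Fin 6), 3) = 0
      · refine not_int_edge_zero GE3 ?_ hintx
        simp only [toRealCut]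
        rw [hx2 GE3]
        simp only [GE3_val]
        rw [hz3]
        norm_num
      by_cases hf3 : cutVec A s((2:Fin 6), 3) + cutVec B s((2:Fin 6), 3) = 2
      · refine not_int_edge_full GE3 ?_ hintx
        simp only [toRealCut]
        rw [hx2 GE3]
        simp only [GE3_val]
        rw [hf3]
        norm_num
      have h3 : cutVec A s((2:Fin 6), 3) + cutVec B s((2:Fin 6), 3) = 1 :=
        key _ _ (cutVec_zero_or_one _ _) (cutVec_zero_or_one _ _) hz3 hf3
      by_cases hz4 : cutVec A s((3:Fin 6), 4) + cutVec B s((3:Fin 6), 4) = 0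
      · refine not_int_edge_zero GE4 ?_ hintx
        simp only [toRealCut]
        rw [hx2 GE4]
        simp only [GE4_val]
        rw [hz4]
        norm_num
      by_cases hf4 : cutVec A s((3:Fin 6), 4) + cutVec B s((3:Fin 6), 4) = 2
      · refine not_int_edge_full GE4 ?_ hintx
        simp only [toRealCut]
        rw [hx2 GE4]
        simp only [GE4_val]
        rw [hf4]
        norm_num
      have h4 : cutVec A s((3:Fin 6), 4) + cutVec B s((3:Fin 6), 4) = 1 :=
        key _ _ (cutVec_zero_or_one _ _) (cutVec_zero_or_one _ _) hz4 hf4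
      by_cases hz5 : cutVec A s((4:Fin 6), 0) + cutVec B s((4:Fin 6), 0) = 0
      · refine not_int_edge_zero GE5 ?_ hintx
        simp only [toRealCut]
        rw [hx2 GE5]
        simp only [GE5_val]
        rw [hz5]
        norm_num
      by_cases hf5 : cutVec A s((4:Fin 6), 0) + cutVec B s((4:Fin 6), 0) = 2
      · refine not_int_edge_full GE5 ?_ hintx
        simp only [toRealCut]
        rw [hx2 GE5]
        simp only [GE5_val]
        rw [hf5]
        norm_num
      have h5 : cutVec A s((4:Fin 6), 0) + cutVec B s((4:Fin 6), 0) = 1 :=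
        key _ _ (cutVec_zero_or_one _ _) (cutVec_zero_or_one _ _) hz5 hf5
      obtain ⟨mA, hmA⟩ := cutVec_cycle_even A
      obtain ⟨mB, hmB⟩ := cutVec_cycle_even B
      have hfive : mA + mA + (mB + mB) = 5 := by linarith
      omega
end

section
/- For every tree T and every cycle C_n (n ≥ 3), the cut monoids M_T and M_{C_n} are normal. -/
variable {V : Type}

open Finset

open Classical in
lemma cutVec_pair {V : Type} (A : Set V) (u v : V) :
    cutVec A s(u, v) = if ((u ∈ A) ↔ (v ∈ A)) then 0 else 1 := by
  simp [cutVec]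

lemma cutVec_nonneg {V : Type} (A : Set V) (e : Sym2 V) : 0 ≤ cutVec A e := by
  induction e using Sym2.ind with
  | _ u v => rw [cutVec_pair]; split <;> norm_num

lemma cutVec_le_one {V : Type} (A : Set V) (e : Sym2 V) : cutVec A e ≤ 1 := by
  induction e using Sym2.ind with
  | _ u v => rw [cutVec_pair]; split <;> norm_num

section cyc
variable (m : ℕ)
open Fin.NatCast Fin.CommRing

lemma one_val_fin : ((1 : Fin (m + 3)) : ℕ) = 1 := by
  have h : ((1 : ℕ) : Fin (m + 3)) = (1 : Fin (m + 3)) := by push_cast; ring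
  rw [← h, Fin.val_cast_of_lt (by omega)]

lemma two_ne_zero_fin : (2 : Fin (m + 3)) ≠ 0 := by
  have h2 : ((2 : ℕ) : Fin (m + 3)) = (2 : Fin (m+3)) := by push_cast; ring
  intro h
  rw [← h2] at h
  have := congrArg Fin.val h
  rw [Fin.val_cast_of_lt (by omega)] at this
  simp at this

lemma cyc_adj_succ (i : Fin (m + 3)) : (SimpleGraph.cycleGraph (m + 3)).Adj i (i + 1) := by
  rw [SimpleGraph.cycleGraph_adj']
  right
  rw [show i + 1 - i = 1 by ring, one_val_fin]

/-- the `i`-th edge of the cycle -/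
noncomputable def cycEdge (i : Fin (m + 3)) : (SimpleGraph.cycleGraph (m + 3)).edgeSet :=
  ⟨s(i, i + 1), cyc_adj_succ m i⟩

lemma cycEdge_injective : Function.Injective (cycEdge m) := by
  intro i j h
  have h' : s(i, i + 1) = s(j, j + 1) := congrArg Subtype.val h
  rw [Sym2.eq_iff] at h'
  rcases h' with ⟨h1, _⟩ | ⟨h1, h2⟩
  · exact h1
  · exfalso
    apply two_ne_zero_fin m
    have h3 : j + 2 = j + 0 := by
      calc j + 2 = (j + 1) + 1 := by ring
        _ = i + 1 := by rw [h1]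
        _ = j := h2
        _ = j + 0 := by ring
    exact add_left_cancel h3

lemma fin_sub_val_one {u v : Fin (m + 3)} (h : ((u - v : Fin (m+3)) : ℕ) = 1) : u = v + 1 := by
  have h1 : u - v = 1 := by
    apply Fin.ext
    rw [h, one_val_fin]
  have := congrArg (· + v) h1
  simpa [sub_add_cancel, add_comm] using this

lemma cycEdge_surjective : Function.Surjective (cycEdge m) := by
  rintro ⟨e, he⟩
  induction e using Sym2.ind with
  | _ u v =>
    rw [SimpleGraph.mem_edgeSet] at he
    rcases SimpleGraph.cycleGraph_adj'.mp he with h | h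
    · refine ⟨v, ?_⟩
      simp only [cycEdge]
      apply Subtype.ext
      show s(v, v + 1) = s(u, v)
      rw [fin_sub_val_one m h]
      exact Sym2.eq_swap
    · refine ⟨u, ?_⟩
      simp only [cycEdge]
      apply Subtype.ext
      show s(u, u + 1) = s(u, v)
      rw [← fin_sub_val_one m h]

/-- realize an even subset of edge-indices as a cut -/
lemma cyc_realize (T : Finset (Fin (m + 3))) (hT : Even T.card) :
    ∃ A : Set (Fin (m + 3)), ∀ i : Fin (m + 3),
      cutVec A s(i, i + 1) = if i ∈ T then 1 else 0 := by
  classical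
  set f : Fin (m+3) → ZMod 2 := fun i => if i ∈ T then 1 else 0 with hf
  set g : Fin (m+3) → ZMod 2 := fun v => ∑ i ∈ Finset.univ.filter (fun i : Fin (m+3) => (i:ℕ) < (v:ℕ)), f i with hg
  have htot : (∑ i, f i) = 0 := by
    rw [hf]
    rw [Finset.sum_boole]
    have hTf : Finset.univ.filter (fun i => i ∈ T) = T := by
      ext i; simp
    rw [hTf, ZMod.natCast_eq_zero_iff]
    exact hT.two_dvd
  have hkey : ∀ i : Fin (m+3), g (i + 1) = g i + f i := by
    intro i
    by_cases hi : (i : ℕ) + 1 < m + 3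
    · have hval : ((i + 1 : Fin (m+3)) : ℕ) = (i : ℕ) + 1 := by
        rw [Fin.add_def, one_val_fin]
        exact Nat.mod_eq_of_lt hi
      have hins : Finset.univ.filter (fun j : Fin (m+3) => (j:ℕ) < (i:ℕ) + 1)
          = insert i (Finset.univ.filter (fun j : Fin (m+3) => (j:ℕ) < (i:ℕ))) := by
        ext j
        simp only [Finset.mem_filter, Finset.mem_univ, true_and, Finset.mem_insert]
        constructor
        · intro h
          rcases Nat.lt_succ_iff_lt_or_eq.mp h with h | h
          · right; exact h
          · left; exact Fin.ext h
        · rintro (rfl | h)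
          · omega
          · omega
      rw [hg]
      simp only [hval]
      rw [hins, Finset.sum_insert (by simp)]
      ring
    · have hival : (i : ℕ) = m + 2 := by have := i.isLt; omega
      have hlast : (i + 1 : Fin (m+3)) = 0 := by
        apply Fin.ext
        rw [Fin.add_def, one_val_fin, hival]
        simp
      have huniv : (Finset.univ : Finset (Fin (m+3)))
          = insert i (Finset.univ.filter (fun j : Fin (m+3) => (j:ℕ) < (i:ℕ))) := by
        ext j
        simp only [Finset.mem_univ, true_iff, Finset.mem_insert, Finset.mem_filter, true_and]
        by_cases hji : j = i
        · left; exact hji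
        · right
          have h1 := j.isLt
          have h2 : (j:ℕ) ≠ (i:ℕ) := fun hc => hji (Fin.ext hc)
          omega
      have h0 : g (0 : Fin (m+3)) = 0 := by
        rw [hg]
        simp
      rw [hlast, h0]
      have : (0 : ZMod 2) = ∑ j, f j := htot.symm
      rw [this, huniv, Finset.sum_insert (by simp)]
      rw [hg]
      ring
  refine ⟨{v | g v = 1}, ?_⟩
  intro i
  rw [cutVec_pair]
  have hz : ∀ a c : ZMod 2, (if ((a = 1) ↔ (a + c = 1)) then (0:ℤ) else 1)
      = (if c = 0 then 0 else 1) := by decide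
  simp only [Set.mem_setOf_eq]
  by_cases hiT : i ∈ T
  · have hfi : f i = 1 := by simp [hf, hiT]
    have hne : ¬(g i = 1 ↔ g (i + 1) = 1) := by
      rw [hkey i, hfi]
      have : ∀ a : ZMod 2, ¬(a = 1 ↔ a + 1 = 1) := by decide
      exact this (g i)
    rw [if_neg hne, if_pos hiT]
  · have hfi : f i = 0 := by simp [hf, hiT]
    have heq : (g i = 1 ↔ g (i + 1) = 1) := by rw [hkey i, hfi, add_zero]
    rw [if_pos heq, if_neg hiT]


end cyc

lemma core_exists (k : ℕ) :
    ∀ (m : ℕ) (x : Fin m → ℕ) (D : Finset (Fin k)),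
    (∀ i, x i ≤ k) →
    Even (D.card + ∑ i, x i) →
    (∀ F : Finset (Fin m), Odd F.card →
      2 * ∑ i ∈ F, (x i : ℤ) ≤ (D.card : ℤ) + ∑ i, (x i : ℤ) + ((F.card : ℤ) - 1) * k) →
    (∀ F : Finset (Fin m), Even F.card →
      2 * (D.card : ℤ) + 2 * ∑ i ∈ F, (x i : ℤ) ≤ (D.card : ℤ) + ∑ i, (x i : ℤ) + (F.card : ℤ) * k) →
    ∃ B : Fin m → Finset (Fin k), (∀ i, (B i).card = x i) ∧
      ∀ j : Fin k, (∑ i, if j ∈ B i then (1 : ZMod 2) else 0) = (if j ∈ D then 1 else 0) := by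
  intro m
  induction m with
  | zero =>
    intro x D _ _ _ h4
    have h40 := h4 ∅ (by simp)
    simp only [Finset.sum_empty, Finset.card_empty, Nat.cast_zero, Fin.sum_univ_zero,
      mul_zero, add_zero, zero_mul] at h40
    have hcard : D.card = 0 := by
      have h0 : (0:ℤ) ≤ (D.card : ℤ) := Int.natCast_nonneg _
      omega
    have hD : D = ∅ := Finset.card_eq_zero.mp hcard
    exact ⟨fun _ => ∅, fun i => i.elim0, fun j => by simp [hD]⟩
  | succ m IH =>
    intro x D h1 h2 h3 h4
    have hx₀ : (D.card : ℤ) = (D.card : ℤ) := rfl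
    set x₁ : ℕ := x 0 with hx₁
    set y : Fin m → ℕ := fun i => x i.succ with hy
    have hsumN : (∑ i, x i) = x₁ + ∑ i, y i := by rw [Fin.sum_univ_succ]
    have hsum : (∑ i, (x i : ℤ)) = (x₁ : ℤ) + ∑ i, (y i : ℤ) := by
      rw [Fin.sum_univ_succ]
    set S : ℤ := ∑ i, (y i : ℤ) with hS
    set x₀ : ℕ := D.card with hx₀'
    have hSnonneg : 0 ≤ S := Finset.sum_nonneg fun i _ => Int.natCast_nonneg _
    set em : Fin m ↪ Fin (m + 1) := ⟨Fin.succ, Fin.succ_injective m⟩ with hem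
    have hmap_sum : ∀ F : Finset (Fin m), (∑ i ∈ F.map em, (x i : ℤ)) = ∑ i ∈ F, (y i : ℤ) := by
      intro F; rw [Finset.sum_map]; rfl
    have hzero_not_mem : ∀ F : Finset (Fin m), (0 : Fin (m+1)) ∉ F.map em := by
      intro F h
      rcases Finset.mem_map.mp h with ⟨i, _, hi⟩
      exact Fin.succ_ne_zero i hi
    have h3' : ∀ F : Finset (Fin m), Odd F.card →
        2 * ∑ i ∈ F, (y i : ℤ) ≤ (x₀ : ℤ) + (x₁ : ℤ) + S + ((F.card : ℤ) - 1) * k := by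
      intro F hF
      have := h3 (F.map em) (by rwa [Finset.card_map])
      rw [hmap_sum, Finset.card_map, hsum] at this
      linarith
    have h3'' : ∀ F : Finset (Fin m), Even F.card →
        2 * (x₁ : ℤ) + 2 * ∑ i ∈ F, (y i : ℤ) ≤ (x₀ : ℤ) + (x₁ : ℤ) + S + (F.card : ℤ) * k := by
      intro F hF
      have hodd : Odd (insert (0 : Fin (m+1)) (F.map em)).card := by
        rw [Finset.card_insert_of_notMem (hzero_not_mem F), Finset.card_map]
        exact Even.add_one hF
      have := h3 (insert (0 : Fin (m+1)) (F.map em)) hodd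
      rw [Finset.sum_insert (hzero_not_mem F), Finset.card_insert_of_notMem (hzero_not_mem F),
        Finset.card_map, hmap_sum, hsum] at this
      push_cast at this ⊢
      linarith
    have h4' : ∀ F : Finset (Fin m), Even F.card →
        2 * (x₀ : ℤ) + 2 * ∑ i ∈ F, (y i : ℤ) ≤ (x₀ : ℤ) + (x₁ : ℤ) + S + (F.card : ℤ) * k := by
      intro F hF
      have := h4 (F.map em) (by rwa [Finset.card_map])
      rw [hmap_sum, Finset.card_map, hsum] at this
      linarith
    have h4'' : ∀ F : Finset (Fin m), Odd F.card →
        2 * (x₀ : ℤ) + 2 * (x₁ : ℤ) + 2 * ∑ i ∈ F, (y i : ℤ)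
          ≤ (x₀ : ℤ) + (x₁ : ℤ) + S + ((F.card : ℤ) + 1) * k := by
      intro F hF
      have heven : Even (insert (0 : Fin (m+1)) (F.map em)).card := by
        rw [Finset.card_insert_of_notMem (hzero_not_mem F), Finset.card_map]
        exact Odd.add_one hF
      have := h4 (insert (0 : Fin (m+1)) (F.map em)) heven
      rw [Finset.sum_insert (hzero_not_mem F), Finset.card_insert_of_notMem (hzero_not_mem F),
        Finset.card_map, hmap_sum, hsum] at this
      push_cast at this ⊢
      linarith
    have hx₀k : x₀ ≤ k := by
      have := Finset.card_le_univ D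
      simpa using this
    have hx₁k : x₁ ≤ k := h1 0
    have hyk : ∀ i, y i ≤ k := fun i => h1 i.succ
    have hyF_le_S : ∀ F : Finset (Fin m), (∑ i ∈ F, (y i : ℤ)) ≤ S := by
      intro F
      apply Finset.sum_le_sum_of_subset_of_nonneg (Finset.subset_univ F)
      intro i _ _; exact Int.natCast_nonneg _
    have hyF_le_card : ∀ F : Finset (Fin m), (∑ i ∈ F, (y i : ℤ)) ≤ (F.card : ℤ) * k := by
      intro F
      calc (∑ i ∈ F, (y i : ℤ)) ≤ ∑ i ∈ F, (k : ℤ) :=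
            Finset.sum_le_sum fun i _ => by exact_mod_cast hyk i
        _ = (F.card : ℤ) * k := by rw [Finset.sum_const]; ring
    set cands : Finset ℤ :=
      insert ((x₁ : ℤ) - x₀) (insert ((x₀ : ℤ) - x₁)
        ((Finset.univ.filter (fun F : Finset (Fin m) => Odd F.card)).image
          (fun F => 2 * ∑ i ∈ F, (y i : ℤ) - S - ((F.card : ℤ) - 1) * k))) with hcands
    have hcne : cands.Nonempty := ⟨_, Finset.mem_insert_self _ _⟩
    set d : ℤ := cands.max' hcne with hd
    have hge1 : (x₁ : ℤ) - x₀ ≤ d := Finset.le_max' _ _ (Finset.mem_insert_self _ _)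
    have hge2 : (x₀ : ℤ) - x₁ ≤ d :=
      Finset.le_max' _ _ (Finset.mem_insert_of_mem (Finset.mem_insert_self _ _))
    have hgeF : ∀ F : Finset (Fin m), Odd F.card →
        2 * ∑ i ∈ F, (y i : ℤ) - S - ((F.card : ℤ) - 1) * k ≤ d := by
      intro F hF
      refine Finset.le_max' _ _ ?_
      refine Finset.mem_insert_of_mem (Finset.mem_insert_of_mem ?_)
      exact Finset.mem_image_of_mem _ (Finset.mem_filter.mpr ⟨Finset.mem_univ F, hF⟩)
    have hd0 : 0 ≤ d := by linarith
    have h2' : Even ((x₀ : ℤ) + x₁ + S) := by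
      rw [hsumN] at h2
      rcases h2 with ⟨t, ht⟩
      refine ⟨(t : ℤ), ?_⟩
      have hc := congrArg (fun n : ℕ => (n : ℤ)) ht
      push_cast at hc
      rw [hS]
      push_cast
      linarith
    have hdpar : Even ((x₀ : ℤ) + x₁ - d) := by
      have hmem := Finset.max'_mem cands hcne
      rw [← hd, hcands] at hmem
      rcases Finset.mem_insert.mp hmem with h | hmem
      · rw [h]; exact ⟨(x₀ : ℤ), by ring⟩
      rcases Finset.mem_insert.mp hmem with h | hmem
      · rw [h]; exact ⟨(x₁ : ℤ), by ring⟩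
      rcases Finset.mem_image.mp hmem with ⟨F, hFmem, hFd⟩
      have hFodd : Odd F.card := (Finset.mem_filter.mp hFmem).2
      rcases hFodd with ⟨t, ht⟩
      rcases h2' with ⟨s, hs⟩
      refine ⟨s - (∑ i ∈ F, (y i : ℤ)) + t * k, ?_⟩
      rw [← hFd, ht]
      push_cast
      linarith
    have hd_le_add : d ≤ (x₀ : ℤ) + x₁ := by
      apply Finset.max'_le
      intro c hc
      have h0 : (0:ℤ) ≤ (x₀:ℤ) := Int.natCast_nonneg _
      have h1' : (0:ℤ) ≤ (x₁:ℤ) := Int.natCast_nonneg _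
      rw [hcands] at hc
      rcases Finset.mem_insert.mp hc with h | hc
      · rw [h]; linarith
      rcases Finset.mem_insert.mp hc with h | hc
      · rw [h]; linarith
      rcases Finset.mem_image.mp hc with ⟨F, hFmem, hFc⟩
      have hFodd : Odd F.card := (Finset.mem_filter.mp hFmem).2
      have := h3' F hFodd
      rw [← hFc]; linarith
    have hd_le_2k : d ≤ 2 * (k : ℤ) - x₀ - x₁ := by
      apply Finset.max'_le
      intro c hc
      have hk0 : (x₀ : ℤ) ≤ k := by exact_mod_cast hx₀k
      have hk1 : (x₁ : ℤ) ≤ k := by exact_mod_cast hx₁k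
      have h0 : (0:ℤ) ≤ (x₀:ℤ) := Int.natCast_nonneg _
      have h1' : (0:ℤ) ≤ (x₁:ℤ) := Int.natCast_nonneg _
      rw [hcands] at hc
      rcases Finset.mem_insert.mp hc with h | hc
      · rw [h]; linarith
      rcases Finset.mem_insert.mp hc with h | hc
      · rw [h]; linarith
      rcases Finset.mem_image.mp hc with ⟨F, hFmem, hFc⟩
      have hFodd : Odd F.card := (Finset.mem_filter.mp hFmem).2
      have := h4'' F hFodd
      rw [← hFc]; linarith
    have hd_le_k : d ≤ (k : ℤ) := by
      apply Finset.max'_le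
      intro c hc
      have hk0 : (x₀ : ℤ) ≤ k := by exact_mod_cast hx₀k
      have hk1 : (x₁ : ℤ) ≤ k := by exact_mod_cast hx₁k
      have h0 : (0:ℤ) ≤ (x₀:ℤ) := Int.natCast_nonneg _
      have h1' : (0:ℤ) ≤ (x₁:ℤ) := Int.natCast_nonneg _
      rw [hcands] at hc
      rcases Finset.mem_insert.mp hc with h | hc
      · rw [h]; linarith
      rcases Finset.mem_insert.mp hc with h | hc
      · rw [h]; linarith
      rcases Finset.mem_image.mp hc with ⟨F, hFmem, hFc⟩
      have hle1 := hyF_le_S F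
      have hle2 := hyF_le_card F
      rw [← hFc]; linarith
    have hd_le_u : ∀ F : Finset (Fin m), Even F.card →
        d ≤ S + (F.card : ℤ) * k - 2 * ∑ i ∈ F, (y i : ℤ) := by
      intro F hFev
      apply Finset.max'_le
      intro c hc
      rw [hcands] at hc
      rcases Finset.mem_insert.mp hc with h | hc
      · rw [h]; have := h3'' F hFev; linarith
      rcases Finset.mem_insert.mp hc with h | hc
      · rw [h]; have := h4' F hFev; linarith
      rcases Finset.mem_image.mp hc with ⟨F', hFmem, hFc⟩
      have hFodd : Odd F'.card := (Finset.mem_filter.mp hFmem).2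
      have hsum_ui : (∑ i ∈ F' ∪ F, (y i : ℤ)) + ∑ i ∈ F' ∩ F, (y i : ℤ)
          = (∑ i ∈ F', (y i : ℤ)) + ∑ i ∈ F, (y i : ℤ) := Finset.sum_union_inter
      have hU_le : (∑ i ∈ F' ∪ F, (y i : ℤ)) ≤ S := hyF_le_S _
      have hI_le : (∑ i ∈ F' ∩ F, (y i : ℤ)) ≤ ((F' ∩ F).card : ℤ) * k := hyF_le_card _
      have hcard : 2 * (F' ∩ F).card + 1 ≤ F'.card + F.card := by
        have hc₁ : (F' ∩ F).card ≤ F'.card := Finset.card_le_card Finset.inter_subset_left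
        have hc₂ : (F' ∩ F).card ≤ F.card := Finset.card_le_card Finset.inter_subset_right
        by_contra hcon
        push_neg at hcon
        have e₁ : F'.card ≤ (F' ∩ F).card := by omega
        have hFF : F' ⊆ F := by
          have hinter : F' ∩ F = F' :=
            Finset.eq_of_subset_of_card_le Finset.inter_subset_left e₁
          intro i hi
          have : i ∈ F' ∩ F := by rw [hinter]; exact hi
          exact (Finset.mem_inter.mp this).2
        have : F' = F := Finset.eq_of_subset_of_card_le hFF (by omega)
        rw [this] at hFodd
        exact (Nat.not_odd_iff_even.mpr hFev) hFodd
      have hcard' : 2 * ((F' ∩ F).card : ℤ) + 1 ≤ (F'.card : ℤ) + F.card := by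
        exact_mod_cast hcard
      have hk0 : (0:ℤ) ≤ (k:ℤ) := Int.natCast_nonneg _
      rw [← hFc]
      nlinarith [hsum_ui, hU_le, hI_le, hcard']
    have hab : ∃ a : ℕ, (a : ℤ) * 2 = (x₀ : ℤ) + x₁ - d := by
      rcases hdpar with ⟨s, hs⟩
      have hs0 : 0 ≤ s := by linarith
      exact ⟨s.toNat, by rw [Int.toNat_of_nonneg hs0]; linarith⟩
    rcases hab with ⟨a, ha⟩
    have hbb : ∃ b : ℕ, (b : ℤ) * 2 = (x₁ : ℤ) - x₀ + d := by
      rcases hdpar with ⟨s, hs⟩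
      have hs1 : 0 ≤ (x₁ : ℤ) - s := by linarith
      exact ⟨((x₁:ℤ) - s).toNat, by rw [Int.toNat_of_nonneg hs1]; linarith⟩
    rcases hbb with ⟨b, hb⟩
    have haD : a ≤ D.card := by
      have hineq : (a : ℤ) ≤ (x₀ : ℤ) := by linarith
      exact_mod_cast hineq
    have hbD : b ≤ Dᶜ.card := by
      rw [Finset.card_compl, Fintype.card_fin]
      have hbk : (b : ℤ) ≤ (k : ℤ) - x₀ := by linarith
      have hbk' : b + x₀ ≤ k := by exact_mod_cast by linarith [hbk]
      omega
    rcases Finset.exists_subset_card_eq haD with ⟨P, hPsub, hPcard⟩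
    rcases Finset.exists_subset_card_eq hbD with ⟨Q, hQsub, hQcard⟩
    have hQD : ∀ j, j ∈ Q → j ∉ D := fun j hj => Finset.mem_compl.mp (hQsub hj)
    set D' : Finset (Fin k) := (D \ P) ∪ Q with hD'
    have hdisj : Disjoint (D \ P) Q := by
      apply Finset.disjoint_left.mpr
      intro j hj hjQ
      exact hQD j hjQ (Finset.mem_sdiff.mp hj).1
    have hD'card : D'.card = (D.card - a) + b := by
      rw [hD', Finset.card_union_of_disjoint hdisj, Finset.card_sdiff_of_subset hPsub, hPcard, hQcard]
    have hD'cardZ : (D'.card : ℤ) = d := by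
      rw [hD'card]
      have hsub : ((D.card - a : ℕ) : ℤ) = (x₀ : ℤ) - a := by
        have : a ≤ D.card := haD
        push_cast [this]
        ring
      push_cast [hsub]
      linarith
    have hparg : Even (D'.card + ∑ i, y i) := by
      have : Even ((D'.card : ℤ) + S) := by
        rcases h2' with ⟨s, hs⟩
        rcases hdpar with ⟨t, ht⟩
        exact ⟨s - t, by rw [hD'cardZ]; linarith⟩
      rw [hS] at this
      exact (Int.even_coe_nat _).mp (by push_cast; exact this)
    have h3g : ∀ F : Finset (Fin m), Odd F.card →
        2 * ∑ i ∈ F, (y i : ℤ) ≤ (D'.card : ℤ) + ∑ i, (y i : ℤ) + ((F.card : ℤ) - 1) * k := by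
      intro F hF
      have := hgeF F hF
      rw [hD'cardZ]
      linarith
    have h4g : ∀ F : Finset (Fin m), Even F.card →
        2 * (D'.card : ℤ) + 2 * ∑ i ∈ F, (y i : ℤ) ≤ (D'.card : ℤ) + ∑ i, (y i : ℤ) + (F.card : ℤ) * k := by
      intro F hF
      have := hd_le_u F hF
      rw [hD'cardZ]
      linarith
    obtain ⟨B', hB'card, hB'par⟩ := IH y D' hyk hparg h3g h4g
    refine ⟨Fin.cases (P ∪ Q) B', ?_, ?_⟩
    · intro i
      refine Fin.cases ?_ ?_ i
      · simp only [Fin.cases_zero]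
        have hdisjPQ : Disjoint P Q := by
          apply Finset.disjoint_left.mpr
          intro j hj hjQ
          exact hQD j hjQ (hPsub hj)
        rw [Finset.card_union_of_disjoint hdisjPQ, hPcard, hQcard]
        have hq : (a : ℤ) + b = x₁ := by linarith
        exact_mod_cast hq
      · intro i
        simp only [Fin.cases_succ]
        exact hB'card i
    · intro j
      rw [Fin.sum_univ_succ]
      simp only [Fin.cases_zero, Fin.cases_succ]
      erw [hB'par j]
      by_cases hjD : j ∈ D
      · have hjQ : j ∉ Q := fun h => hQD j h hjD
        by_cases hjP : j ∈ P
        · have hm1 : j ∈ P ∪ Q := Finset.mem_union_left _ hjP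
          have hm2 : j ∉ D' := by
            rw [hD']
            simp [Finset.mem_union, Finset.mem_sdiff, hjP, hjQ]
          simp [hm1, hm2, hjD]
        · have hm1 : j ∉ P ∪ Q := by simp [hjP, hjQ]
          have hm2 : j ∈ D' := by
            rw [hD']
            simp [Finset.mem_union, Finset.mem_sdiff, hjD, hjP]
          simp [hm1, hm2, hjD]
      · have hjP : j ∉ P := fun h => hjD (hPsub h)
        by_cases hjQ : j ∈ Q
        · have hm1 : j ∈ P ∪ Q := Finset.mem_union_right _ hjQ
          have hm2 : j ∈ D' := by rw [hD']; exact Finset.mem_union_right _ hjQ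
          simp only [hm1, hm2, hjD, if_true, if_false]
          all_goals decide
        · have hm1 : j ∉ P ∪ Q := by simp [hjP, hjQ]
          have hm2 : j ∉ D' := by
            rw [hD']
            simp [Finset.mem_union, Finset.mem_sdiff, hjD, hjQ]
          simp [hm1, hm2, hjD]

section cycmain
variable (m : ℕ)

lemma cutVec_eq_zero_or_one {V : Type} (A : Set V) (e : Sym2 V) :
    cutVec A e = 0 ∨ cutVec A e = 1 := by
  induction e using Sym2.ind with
  | _ u v =>
    rw [cutVec_pair]
    by_cases h : ((u ∈ A) ↔ (v ∈ A))
    · left; rw [if_pos h]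
    · right; rw [if_neg h]

lemma gen_parity (A : Set (Fin (m+3))) : Even (∑ i, cutVec A s(i, i + 1)) := by
  classical
  have hz : ((∑ i, cutVec A s(i, i + 1) : ℤ) : ZMod 2) = 0 := by
    push_cast
    set χ : Fin (m+3) → ZMod 2 := fun v => if v ∈ A then 1 else 0 with hχ
    have step : ∀ i : Fin (m+3), ((cutVec A s(i, i + 1) : ℤ) : ZMod 2) = χ (i+1) - χ i := by
      intro i
      rw [cutVec_pair]
      by_cases h1 : i ∈ A <;> by_cases h2 : i + 1 ∈ A <;>
        simp [hχ, h1, h2] <;> decide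
    rw [Finset.sum_congr rfl (fun i _ => step i), Finset.sum_sub_distrib]
    have : (∑ i : Fin (m+3), χ (i + 1)) = ∑ i : Fin (m+3), χ i :=
      Fintype.sum_equiv (Equiv.addRight 1) _ _ (fun i => rfl)
    rw [this, sub_self]
  rcases (ZMod.intCast_zmod_eq_zero_iff_dvd _ 2).mp hz with ⟨c, hc⟩
  push_cast at hc
  exact ⟨c, by linarith⟩

lemma gen_oddF (A : Set (Fin (m+3))) (F : Finset (Fin (m+3))) (hF : Odd F.card) :
    2 * ∑ i ∈ F, cutVec A s(i, i + 1)
      ≤ (∑ i, cutVec A s(i, i + 1)) + ((F.card : ℤ) - 1) := by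
  classical
  set s : Finset (Fin (m+3)) := Finset.univ.filter (fun i => cutVec A s(i, i + 1) = 1) with hs
  have hval : ∀ i, cutVec A s(i, i + 1) = if i ∈ s then 1 else 0 := by
    intro i
    by_cases hi : i ∈ s
    · rw [if_pos hi]; exact (Finset.mem_filter.mp hi).2
    · rw [if_neg hi]
      rcases cutVec_eq_zero_or_one A s(i, i+1) with h | h
      · exact h
      · exact absurd (Finset.mem_filter.mpr ⟨Finset.mem_univ i, h⟩) hi
  have hsumG : ∀ G : Finset (Fin (m+3)), (∑ i ∈ G, cutVec A s(i, i + 1)) = ((G ∩ s).card : ℤ) := by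
    intro G
    rw [Finset.sum_congr rfl (fun i _ => hval i), Finset.sum_boole,
      Finset.filter_mem_eq_inter]
  have hseven : Even s.card := by
    have := gen_parity m A
    rw [hsumG Finset.univ] at this
    rw [Finset.univ_inter] at this
    exact (Int.even_coe_nat _).mp this
  rw [hsumG F, hsumG Finset.univ, Finset.univ_inter]
  have hnat : 2 * (F ∩ s).card + 1 ≤ s.card + F.card := by
    by_cases hsub : s ⊆ F
    · have hFs : F ∩ s = s := Finset.inter_eq_right.mpr hsub
      have hle : s.card ≤ F.card := Finset.card_le_card hsub
      have hne : s.card ≠ F.card := by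
        intro h
        rw [h] at hseven
        exact (Nat.not_odd_iff_even.mpr hseven) hF
      rw [hFs]
      omega
    · rcases Finset.not_subset.mp hsub with ⟨e, hes, heF⟩
      have h1 : (F ∩ s) ⊆ s.erase e := by
        intro i hi
        rcases Finset.mem_inter.mp hi with ⟨hiF, his⟩
        exact Finset.mem_erase.mpr ⟨fun hc => heF (hc ▸ hiF), his⟩
      have h2 : (F ∩ s).card ≤ s.card - 1 := by
        have := Finset.card_le_card h1
        rw [Finset.card_erase_of_mem hes] at this
        exact this
      have h3 : (F ∩ s).card ≤ F.card := Finset.card_le_card Finset.inter_subset_left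
      have h4 : 1 ≤ s.card := Finset.card_pos.mpr ⟨e, hes⟩
      omega
  have hcast : (2 : ℤ) * ((F ∩ s).card : ℤ) + 1 ≤ (s.card : ℤ) + F.card := by exact_mod_cast hnat
  linarith

/-- conditions satisfied by all elements of the cut monoid of the cycle -/
def McondC (p : ((SimpleGraph.cycleGraph (m+3)).edgeSet → ℤ) × ℤ) : Prop :=
  0 ≤ p.2 ∧ (∀ i, 0 ≤ p.1 (cycEdge m i) ∧ p.1 (cycEdge m i) ≤ p.2) ∧
    Even (∑ i, p.1 (cycEdge m i)) ∧
    ∀ F : Finset (Fin (m+3)), Odd F.card →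
      2 * ∑ i ∈ F, p.1 (cycEdge m i)
        ≤ (∑ i, p.1 (cycEdge m i)) + ((F.card : ℤ) - 1) * p.2

lemma cutMonoid_cyc_cond (p : ((SimpleGraph.cycleGraph (m+3)).edgeSet → ℤ) × ℤ)
    (hp : p ∈ cutMonoid (SimpleGraph.cycleGraph (m+3))) : McondC m p := by
  induction hp using AddSubmonoid.closure_induction with
  | mem q hq =>
    rcases hq with ⟨A, rfl⟩
    refine ⟨by norm_num, fun i => ⟨cutVec_nonneg A _, cutVec_le_one A _⟩, ?_, ?_⟩
    · exact gen_parity m A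
    · intro F hF
      simpa [cycEdge] using gen_oddF m A F hF
  | zero => exact ⟨le_refl 0, fun i => ⟨le_refl 0, le_refl 0⟩, by simp, fun F hF => by simp⟩
  | add q r hq hr hq' hr' =>
    obtain ⟨hq1, hq2, hq3, hq4⟩ := hq'
    obtain ⟨hr1, hr2, hr3, hr4⟩ := hr'
    refine ⟨by simp [Prod.snd_add]; linarith, fun i => ?_, ?_, ?_⟩
    · have := hq2 i; have := hr2 i
      constructor
      · simp only [Prod.fst_add, Pi.add_apply]; linarith [ (hq2 i).1, (hr2 i).1 ]
      · simp only [Prod.fst_add, Pi.add_apply, Prod.snd_add]; linarith [ (hq2 i).2, (hr2 i).2 ]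
    · simp only [Prod.fst_add, Pi.add_apply, Finset.sum_add_distrib]
      exact hq3.add hr3
    · intro F hF
      have h1 := hq4 F hF
      have h2 := hr4 F hF
      simp only [Prod.fst_add, Pi.add_apply, Prod.snd_add, Finset.sum_add_distrib]
      nlinarith [h1, h2]

lemma cutGroup_cyc_even (p : ((SimpleGraph.cycleGraph (m+3)).edgeSet → ℤ) × ℤ)
    (hp : p ∈ cutGroup (SimpleGraph.cycleGraph (m+3))) : Even (∑ i, p.1 (cycEdge m i)) := by
  induction hp using AddSubgroup.closure_induction with
  | mem q hq =>
    rcases hq with ⟨A, rfl⟩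
    exact gen_parity m A
  | zero => simp
  | add q r hq hr hq' hr' =>
    simp only [Prod.fst_add, Pi.add_apply, Finset.sum_add_distrib]
    exact hq'.add hr'
  | neg q hq hq' =>
    simp only [Prod.fst_neg, Pi.neg_apply, Finset.sum_neg_distrib]
    exact hq'.neg

lemma cyc_mem_of_cond (p : ((SimpleGraph.cycleGraph (m+3)).edgeSet → ℤ) × ℤ)
    (hc : McondC m p) : p ∈ cutMonoid (SimpleGraph.cycleGraph (m+3)) := by
  classical
  obtain ⟨hk, hbd, hev, hodd⟩ := hc
  set k' : ℕ := p.2.toNat with hk'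
  have hk'cast : (k' : ℤ) = p.2 := Int.toNat_of_nonneg hk
  set xN : Fin (m+3) → ℕ := fun i => (p.1 (cycEdge m i)).toNat with hxN
  have hxcast : ∀ i, (xN i : ℤ) = p.1 (cycEdge m i) := fun i => Int.toNat_of_nonneg (hbd i).1
  have h1 : ∀ i, xN i ≤ k' := by
    intro i
    have := (hbd i).2
    rw [← hxcast i, ← hk'cast] at this
    exact_mod_cast this
  have hsumcast : ((∑ i, xN i : ℕ) : ℤ) = ∑ i, p.1 (cycEdge m i) := by
    push_cast
    exact Finset.sum_congr rfl (fun i _ => hxcast i)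
  have h2 : Even ((∅ : Finset (Fin k')).card + ∑ i, xN i) := by
    rw [Finset.card_empty, zero_add]
    rw [← Int.even_coe_nat, hsumcast]
    exact hev
  have h3 : ∀ F : Finset (Fin (m+3)), Odd F.card →
      2 * ∑ i ∈ F, (xN i : ℤ) ≤ (((∅ : Finset (Fin k')).card : ℤ)) + ∑ i, (xN i : ℤ)
        + ((F.card : ℤ) - 1) * k' := by
    intro F hF
    have := hodd F hF
    simp only [Finset.card_empty, Nat.cast_zero, zero_add]
    rw [Finset.sum_congr rfl (fun i (_ : i ∈ F) => hxcast i),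
      Finset.sum_congr rfl (fun i (_ : i ∈ univ) => hxcast i), hk'cast]
    exact this
  have h4 : ∀ F : Finset (Fin (m+3)), Even F.card →
      2 * (((∅ : Finset (Fin k')).card : ℤ)) + 2 * ∑ i ∈ F, (xN i : ℤ)
        ≤ (((∅ : Finset (Fin k')).card : ℤ)) + ∑ i, (xN i : ℤ) + (F.card : ℤ) * k' := by
    intro F _
    simp only [Finset.card_empty, Nat.cast_zero, zero_add, mul_zero, two_mul]
    have hle1 : (∑ i ∈ F, (xN i : ℤ)) ≤ ∑ i, (xN i : ℤ) := by
      apply Finset.sum_le_sum_of_subset_of_nonneg (Finset.subset_univ F)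
      intro i _ _; positivity
    have hle2 : (∑ i ∈ F, (xN i : ℤ)) ≤ (F.card : ℤ) * k' := by
      calc (∑ i ∈ F, (xN i : ℤ)) ≤ ∑ i ∈ F, (k' : ℤ) :=
            Finset.sum_le_sum fun i _ => by exact_mod_cast h1 i
        _ = (F.card : ℤ) * k' := by rw [Finset.sum_const]; ring
    linarith
  obtain ⟨B, hBcard, hBpar⟩ := core_exists k' (m+3) xN ∅ h1 h2 h3 h4
  set T : Fin k' → Finset (Fin (m+3)) := fun j => Finset.univ.filter (fun i => j ∈ B i) with hT
  have hTeven : ∀ j, Even (T j).card := by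
    intro j
    have hcast : (((T j).card : ℕ) : ZMod 2) = ∑ i, if j ∈ B i then (1 : ZMod 2) else 0 := by
      rw [hT]
      simp only
      rw [Finset.card_filter]
      push_cast
      apply Finset.sum_congr rfl
      intro i _
      split <;> simp
    rw [hBpar j] at hcast
    simp only [Finset.notMem_empty, if_false] at hcast
    exact (even_iff_two_dvd).mpr ((ZMod.natCast_eq_zero_iff _ 2).mp hcast)
  choose A hA using fun j => cyc_realize m (T j) (hTeven j)
  have hmem : ∀ j : Fin k',
      ((fun e => cutVec (A j) e.1, (1:ℤ)) : ((SimpleGraph.cycleGraph (m+3)).edgeSet → ℤ) × ℤ)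
        ∈ cutMonoid (SimpleGraph.cycleGraph (m+3)) :=
    fun j => AddSubmonoid.subset_closure ⟨A j, rfl⟩
  have hpeq : p = ∑ j : Fin k',
      ((fun e => cutVec (A j) e.1, (1:ℤ)) : ((SimpleGraph.cycleGraph (m+3)).edgeSet → ℤ) × ℤ) := by
    apply Prod.ext
    · rw [Prod.fst_sum]
      funext e
      rw [Finset.sum_apply]
      obtain ⟨i, rfl⟩ := cycEdge_surjective m e
      have : ∀ j : Fin k', cutVec (A j) (cycEdge m i).1 = if i ∈ T j then 1 else 0 := by
        intro j
        exact hA j i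
      rw [Finset.sum_congr rfl (fun j _ => this j)]
      rw [Finset.sum_boole]
      have : Finset.univ.filter (fun j => i ∈ T j) = Finset.univ.filter (fun j => j ∈ B i) := by
        apply Finset.filter_congr
        intro j _
        rw [hT]
        simp
      rw [this]
      have : (Finset.univ.filter (fun j => j ∈ B i)) = B i := by
        ext j; simp
      rw [this, hBcard i, hxcast i]
    · rw [Prod.snd_sum]
      simp [hk'cast]
  rw [hpeq]
  exact AddSubmonoid.sum_mem _ (fun j _ => hmem j)

end cycmain

/-- Realize an arbitrary ZMod-2 edge labelling of a tree as a cut. -/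
lemma tree_realize {W : Type} (T : SimpleGraph W) (hc : T.Connected) (ha : T.IsAcyclic)
    (f : Sym2 W → ZMod 2) :
    ∃ A : Set W, ∀ u v, T.Adj u v →
      cutVec A s(u, v) = if f s(u, v) = 0 then 0 else 1 := by
  classical
  obtain ⟨r⟩ := hc.nonempty
  have hreach : ∀ v, T.Reachable r v := fun v => hc.preconnected r v
  set P : (v : W) → T.Path r v := fun v => ((hreach v).some).toPath with hP
  set g : W → ZMod 2 := fun v => ((P v).1.edges.map f).sum with hg
  have key : ∀ u v, T.Adj u v → g v = g u + f s(u, v) := by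
    intro u v huv
    have flip : ∀ a b c : ZMod 2, a = b + c → b = a + c := by decide
    by_cases hv : v ∈ (P u).1.support
    · -- v lies on the path to u; the path to u is path-to-v plus the edge
      set q := (P u).1.takeUntil v hv with hq
      set d := (P u).1.dropUntil v hv with hd
      have hqp : q.IsPath := (P u).2.takeUntil hv
      have hdp : d.IsPath := (P u).2.dropUntil hv
      have hPu : q.append d = (P u).1 := (P u).1.take_spec hv
      -- d.reverse is a path from u to v, hence the single edge
      have hdrev : d.reverse = SimpleGraph.Walk.cons huv SimpleGraph.Walk.nil := by
        have := ha.path_unique ⟨d.reverse, hdp.reverse⟩ (SimpleGraph.Path.singleton huv)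
        have := congrArg Subtype.val this
        simpa [SimpleGraph.Path.singleton] using this
      have hdeq : d = (SimpleGraph.Walk.cons huv SimpleGraph.Walk.nil).reverse := by
        rw [← hdrev, SimpleGraph.Walk.reverse_reverse]
      have hdedges : d.edges = [s(u, v)] := by
        rw [hdeq, SimpleGraph.Walk.edges_reverse]
        simp [Sym2.eq_swap]
      have hPveq : (P v).1 = q := by
        have := ha.path_unique (P v) ⟨q, hqp⟩
        exact congrArg Subtype.val this
      have hgu : g u = g v + f s(u, v) := by
        rw [hg]
        simp only
        rw [← hPu, SimpleGraph.Walk.edges_append, List.map_append, List.sum_append,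
          hdedges, hPveq]
        simp
      exact flip _ _ _ hgu
    · -- extend the path to u by the edge uv
      set w := (SimpleGraph.Walk.cons huv.symm (P u).1.reverse).reverse with hw
      have hwp : w.IsPath := by
        apply SimpleGraph.Walk.IsPath.reverse
        apply SimpleGraph.Walk.IsPath.cons (P u).2.reverse
        rw [SimpleGraph.Walk.support_reverse]
        intro hmem
        exact hv (List.mem_reverse.mp hmem)
      have hPveq : (P v).1 = w := by
        have := ha.path_unique (P v) ⟨w, hwp⟩
        exact congrArg Subtype.val this
      have hwedges : w.edges = (P u).1.edges ++ [s(u, v)] := by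
        rw [hw, SimpleGraph.Walk.edges_reverse, SimpleGraph.Walk.edges_cons,
          SimpleGraph.Walk.edges_reverse]
        simp [Sym2.eq_swap]
      rw [hg]
      simp only
      rw [hPveq, hwedges, List.map_append, List.sum_append]
      simp
  refine ⟨{v | g v = 1}, ?_⟩
  intro u v huv
  rw [cutVec_pair]
  simp only [Set.mem_setOf_eq]
  by_cases hf : f s(u, v) = 0
  · have heq : (g u = 1 ↔ g v = 1) := by rw [key u v huv, hf, add_zero]
    rw [if_pos heq, if_pos hf]
  · have hf1 : f s(u, v) = 1 := by
      rcases (show ∀ a : ZMod 2, a = 0 ∨ a = 1 by decide) (f s(u, v)) with h | h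
      · exact absurd h hf
      · exact h
    have hne : ¬(g u = 1 ↔ g v = 1) := by
      rw [key u v huv, hf1]
      have : ∀ a : ZMod 2, ¬(a = 1 ↔ a + 1 = 1) := by decide
      exact this (g u)
    rw [if_neg hne, if_neg hf]


section treemain
variable {W : Type}

lemma cutMonoid_bounds (G : SimpleGraph W) (p : (G.edgeSet → ℤ) × ℤ)
    (hp : p ∈ cutMonoid G) : 0 ≤ p.2 ∧ ∀ e, 0 ≤ p.1 e ∧ p.1 e ≤ p.2 := by
  induction hp using AddSubmonoid.closure_induction with
  | mem q hq =>
    rcases hq with ⟨A, rfl⟩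
    exact ⟨by norm_num, fun e => ⟨cutVec_nonneg A _, cutVec_le_one A _⟩⟩
  | zero => exact ⟨le_refl 0, fun e => ⟨le_refl 0, le_refl 0⟩⟩
  | add q r _ _ hq' hr' =>
    refine ⟨?_, fun e => ?_⟩
    · simp only [Prod.snd_add]; linarith [hq'.1, hr'.1]
    · constructor
      · simp only [Prod.fst_add, Pi.add_apply]; linarith [(hq'.2 e).1, (hr'.2 e).1]
      · simp only [Prod.fst_add, Pi.add_apply, Prod.snd_add]
        linarith [(hq'.2 e).2, (hr'.2 e).2]

lemma tree_mem_of_cond (G : SimpleGraph W) (hc : G.Connected) (ha : G.IsAcyclic) :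
    ∀ (kN : ℕ) (xf : G.edgeSet → ℤ), (∀ e, 0 ≤ xf e ∧ xf e ≤ (kN : ℤ)) →
      ((xf, (kN : ℤ)) : (G.edgeSet → ℤ) × ℤ) ∈ cutMonoid G := by
  intro kN
  induction kN with
  | zero =>
    intro xf hxf
    have hzero : (xf, ((0:ℕ):ℤ)) = (0 : (G.edgeSet → ℤ) × ℤ) := by
      apply Prod.ext
      · funext e
        have := hxf e
        simp only [Nat.cast_zero] at this
        simp only [Prod.fst_zero, Pi.zero_apply]
        omega
      · simp
    rw [hzero]
    exact (cutMonoid G).zero_mem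
  | succ kN IH =>
    intro xf hxf
    classical
    set f : Sym2 W → ZMod 2 :=
      fun s => if (∃ hs : s ∈ G.edgeSet, 1 ≤ xf ⟨s, hs⟩) then 1 else 0 with hf
    obtain ⟨A, hA⟩ := tree_realize G hc ha f
    have hval : ∀ e : G.edgeSet, cutVec A e.1 = if 1 ≤ xf e then 1 else 0 := by
      rintro ⟨e, he⟩
      revert he
      induction e using Sym2.ind with
      | _ u v =>
        intro he
        have hadj : G.Adj u v := (SimpleGraph.mem_edgeSet G).mp he
        rw [hA u v hadj]
        by_cases h1 : 1 ≤ xf ⟨s(u,v), he⟩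
        · have hfe : f s(u,v) = 1 := by rw [hf]; exact if_pos ⟨he, h1⟩
          rw [hfe, if_neg one_ne_zero, if_pos h1]
        · have hfe : f s(u,v) = 0 := by
            rw [hf]
            apply if_neg
            rintro ⟨hs, hle⟩
            exact h1 hle
          rw [hfe, if_pos rfl, if_neg h1]
    set yf : G.edgeSet → ℤ := fun e => xf e - cutVec A e.1 with hyf
    have hy : ∀ e, 0 ≤ yf e ∧ yf e ≤ (kN : ℤ) := by
      intro e
      have hb := hxf e
      push_cast at hb
      rw [hyf]
      simp only
      rw [hval e]
      by_cases h1 : 1 ≤ xf e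
      · rw [if_pos h1]
        exact ⟨by linarith, by linarith [hb.2]⟩
      · rw [if_neg h1]
        push_neg at h1
        exact ⟨by linarith [hb.1], by linarith [hb.1]⟩
    have hmem := IH yf hy
    have heq : ((xf, ((kN+1:ℕ) : ℤ)) : (G.edgeSet → ℤ) × ℤ)
        = ((fun e => cutVec A e.1, (1:ℤ)) : (G.edgeSet → ℤ) × ℤ) + (yf, (kN:ℤ)) := by
      apply Prod.ext
      · funext e
        simp only [Prod.fst_add, Pi.add_apply, hyf]
        ring
      · simp only [Prod.snd_add]
        push_cast
        ring
    rw [heq]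
    exact (cutMonoid G).add_mem (AddSubmonoid.subset_closure ⟨A, rfl⟩) hmem

lemma tree_cutNormal (G : SimpleGraph W) (hc : G.Connected) (ha : G.IsAcyclic) :
    CutNormal G := by
  intro x _ hex
  obtain ⟨c, hc1, hcM⟩ := hex
  obtain ⟨h1, h2⟩ := cutMonoid_bounds G _ hcM
  have hcpos : (0:ℤ) < (c:ℤ) := by exact_mod_cast hc1
  have hsnd : (c • x).2 = (c:ℤ) * x.2 := by
    simp [Prod.smul_snd, nsmul_eq_mul]
  have hfst : ∀ e, (c • x).1 e = (c:ℤ) * x.1 e := by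
    intro e
    simp [Prod.smul_fst, Pi.smul_apply, nsmul_eq_mul]
  have hx2 : 0 ≤ x.2 := by
    rw [hsnd] at h1
    have h0 : (c:ℤ) * 0 ≤ (c:ℤ) * x.2 := by rwa [mul_zero]
    exact (mul_le_mul_iff_of_pos_left hcpos).mp h0
  have hkcast : ((x.2.toNat : ℕ) : ℤ) = x.2 := Int.toNat_of_nonneg hx2
  have hbd : ∀ e, 0 ≤ x.1 e ∧ x.1 e ≤ ((x.2.toNat : ℕ) : ℤ) := by
    intro e
    obtain ⟨ha', hb'⟩ := h2 e
    rw [hfst e] at ha' hb'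
    rw [hsnd] at hb'
    rw [hkcast]
    constructor
    · have h0 : (c:ℤ) * 0 ≤ (c:ℤ) * x.1 e := by rwa [mul_zero]
      exact (mul_le_mul_iff_of_pos_left hcpos).mp h0
    · exact (mul_le_mul_iff_of_pos_left hcpos).mp hb'
  have hmem := tree_mem_of_cond G hc ha x.2.toNat x.1 hbd
  rw [hkcast] at hmem
  simpa using hmem

end treemain

lemma cyc_cutNormal (m : ℕ) : CutNormal (SimpleGraph.cycleGraph (m+3)) := by
  intro x hx hex
  obtain ⟨c, hc1, hcM⟩ := hex
  have hev := cutGroup_cyc_even m x hx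
  obtain ⟨h1, h2, _, h4⟩ := cutMonoid_cyc_cond m _ hcM
  have hcpos : (0:ℤ) < (c:ℤ) := by exact_mod_cast hc1
  have hsnd : (c • x).2 = (c:ℤ) * x.2 := by
    simp [Prod.smul_snd, nsmul_eq_mul]
  have hfst : ∀ e, (c • x).1 e = (c:ℤ) * x.1 e := by
    intro e
    simp [Prod.smul_fst, Pi.smul_apply, nsmul_eq_mul]
  apply cyc_mem_of_cond
  refine ⟨?_, ?_, hev, ?_⟩
  · rw [hsnd] at h1
    have h0 : (c:ℤ) * 0 ≤ (c:ℤ) * x.2 := by rwa [mul_zero]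
    exact (mul_le_mul_iff_of_pos_left hcpos).mp h0
  · intro i
    obtain ⟨ha', hb'⟩ := h2 i
    rw [hfst _] at ha' hb'
    rw [hsnd] at hb'
    constructor
    · have h0 : (c:ℤ) * 0 ≤ (c:ℤ) * x.1 (cycEdge m i) := by rwa [mul_zero]
      exact (mul_le_mul_iff_of_pos_left hcpos).mp h0
    · exact (mul_le_mul_iff_of_pos_left hcpos).mp hb'
  · intro F hF
    have h := h4 F hF
    have hs1 : (∑ i ∈ F, (c • x).1 (cycEdge m i)) = (c:ℤ) * ∑ i ∈ F, x.1 (cycEdge m i) := by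
      rw [Finset.mul_sum]
      exact Finset.sum_congr rfl fun i _ => hfst _
    have hs2 : (∑ i, (c • x).1 (cycEdge m i)) = (c:ℤ) * ∑ i, x.1 (cycEdge m i) := by
      rw [Finset.mul_sum]
      exact Finset.sum_congr rfl fun i _ => hfst _
    rw [hs1, hs2, hsnd] at h
    have hmul : (c:ℤ) * (2 * ∑ i ∈ F, x.1 (cycEdge m i))
        ≤ (c:ℤ) * ((∑ i, x.1 (cycEdge m i)) + ((F.card : ℤ) - 1) * x.2) := by
      ring_nf
      ring_nf at h
      linarith
    exact (mul_le_mul_iff_of_pos_left hcpos).mp hmul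

/-- The cut monoid of every (finite) tree and of every cycle `Cₙ`
(`n ≥ 3`) is normal. -/
theorem tree_cycle_cutNormal :
    (∀ {V : Type} [Fintype V] (T : SimpleGraph V),
      T.Connected → T.IsAcyclic → CutNormal T) ∧
    (∀ n : ℕ, 3 ≤ n → CutNormal (SimpleGraph.cycleGraph n)) := by
  constructor
  · intro V _ T hconn hacyc
    exact tree_cutNormal T hconn hacyc
  · intro n hn
    obtain ⟨m, rfl⟩ : ∃ m, n = m + 3 := ⟨n - 3, by omega⟩
    exact cyc_cutNormal m
end
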